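/- arXiv:1404.6037 — 4 statements merged into one kernel-verified Lean document; each statement's English description precedes it below -/
import Mathlib

section
/- The left conjunction rule is depth-preserving invertible in LBIZ: if Γ(F ∧ G) ⊢ H is derivable in LBIZ with derivation depth at most k, then Γ(F; G) ⊢ H is derivable in LBIZ with derivation depth at most k. -/
/-- BI formulas: propositional variables, ⊤, ⊥, ⊤*, ∧, ∨, ⊃, *, −∗. -/
inductive BI : Type
  | var : Nat → BI
  | top : BI
  | bot : BI
  | mtop : BI
  | conj : BI → BI → BI
  | disj : BI → BI → BI
  | imp : BI → BI → BI
  | star : BI → BI → BI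
  | wand : BI → BI → BI

/-- Bunches (BI structures): Γ := F | Γ; Γ | Γ, Γ. -/
inductive Bunch : Type
  | fm : BI → Bunch
  | semi : Bunch → Bunch → Bunch   -- additive ';'
  | comma : Bunch → Bunch → Bunch  -- multiplicative ','

/-- Structural congruence: full associativity and commutativity of ';' and ','. -/
inductive BunchEq : Bunch → Bunch → Prop
  | refl (Γ : Bunch) : BunchEq Γ Γ
  | symm {a b} : BunchEq a b → BunchEq b a
  | trans {a b c} : BunchEq a b → BunchEq b c → BunchEq a c
  | semiComm (a b : Bunch) : BunchEq (.semi a b) (.semi b a)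
  | semiAssoc (a b c : Bunch) : BunchEq (.semi (.semi a b) c) (.semi a (.semi b c))
  | commaComm (a b : Bunch) : BunchEq (.comma a b) (.comma b a)
  | commaAssoc (a b c : Bunch) : BunchEq (.comma (.comma a b) c) (.comma a (.comma b c))
  | semiCongr {a a' b b'} : BunchEq a a' → BunchEq b b' → BunchEq (.semi a b) (.semi a' b')
  | commaCongr {a a' b b'} : BunchEq a a' → BunchEq b b' → BunchEq (.comma a b) (.comma a' b')

/-- Bunched contexts with a single hole. -/
inductive Ctx : Type
  | hole : Ctx
  | semiL : Ctx → Bunch → Ctx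
  | semiR : Bunch → Ctx → Ctx
  | commaL : Ctx → Bunch → Ctx
  | commaR : Bunch → Ctx → Ctx

/-- Filling the hole of a context with a bunch. -/
def Ctx.fill : Ctx → Bunch → Bunch
  | .hole, Δ => Δ
  | .semiL C Γ, Δ => .semi (C.fill Δ) Γ
  | .semiR Γ C, Δ => .semi Γ (C.fill Δ)
  | .commaL C Γ, Δ => .comma (C.fill Δ) Γ
  | .commaR Γ C, Δ => .comma Γ (C.fill Δ)

/-- `osemi Γ̃ Δ` is `Γ̃; Δ`, where `Γ̃` may be empty. -/
def osemi : Option Bunch → Bunch → Bunch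
  | none, b => b
  | some a, b => .semi a b

/-- `ocomma Γ̃ Δ` is `Γ̃, Δ`, where `Γ̃` may be empty. -/
def ocomma : Option Bunch → Bunch → Bunch
  | none, b => b
  | some a, b => .comma a b

/-- The weakening preorder ⪯ on bunches: smallest reflexive (up to structural
congruence) and transitive relation with Γ(Δ) ⪯ Γ(Δ; Γ'). -/
inductive Wle : Bunch → Bunch → Prop
  | ofEq {a b} : BunchEq a b → Wle a b
  | weak (C : Ctx) (Δ Γ' : Bunch) : Wle (C.fill Δ) (C.fill (.semi Δ Γ'))
  | trans {a b c} : Wle a b → Wle b c → Wle a c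

/-- `(⊤*; Γ̃)` where `Γ̃` is possibly empty. -/
def mte : Option Bunch → Bunch
  | none => .fm .mtop
  | some Δ => .semi (.fm .mtop) Δ

/-- `Essence Γ₁ Γ₂` : Γ₂ is an essence of Γ₁. -/
inductive Essence : Bunch → Bunch → Prop
  | ofEq {a b} : BunchEq a b → Essence a b
  | insert {a} (C : Ctx) (Γ' : Bunch) (Δ : Option Bunch) :
      Essence a (C.fill Γ') → Essence a (C.fill (.comma Γ' (mte Δ)))
  | insertSemi {a} (C : Ctx) (Γ' Γ'' : Bunch) (Δ : Option Bunch) :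
      Essence a (C.fill (.semi Γ' Γ'')) →
      Essence a (C.fill (.semi (.comma Γ' (mte Δ)) Γ''))
  | congr {a b c} : Essence a b → BunchEq b c → Essence a c

/-- `Candidate Γ R₁ R₂` : (R₁, R₂) is a candidate of Γ. -/
def Candidate (Γ R₁ R₂ : Bunch) : Prop :=
  (R₂ = .fm .mtop ∧ Wle R₁ Γ) ∨ Wle (.comma R₁ R₂) Γ

/-- The representing preorder ⪯̂. -/
inductive RWle : Bunch → Bunch → Prop
  | ofEq {a b} : BunchEq a b → RWle a b
  | weak (a b : Bunch) : RWle a (.semi a b)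
  | weakComma (a b c : Bunch) : RWle (.comma a b) (.comma a (.semi b c))
  | trans {a b c} : RWle a b → RWle b c → RWle a c

/-- `RepCandidate Γ R₁ R₂` : (R₁, R₂) is a representing candidate of Γ. -/
def RepCandidate (Γ R₁ R₂ : Bunch) : Prop :=
  (R₂ = .fm .mtop ∧ RWle R₁ Γ) ∨ RWle (.comma R₁ R₂) Γ

/-- The LBIZ sequent calculus (parametrised by the candidate relation used in
*R and −∗L, and by whether the Cut rule is available), with derivation depth.
There are no structural rules; bunches are identified up to
associativity/commutativity via the depth-neutral `equiv` rule. -/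
inductive LBIZ (Cand : Bunch → Bunch → Bunch → Prop) (cut : Bool) :
    Bunch → BI → Nat → Prop
  | id (Γt : Option Bunch) (p : Nat) {Δ : Bunch} :
      Essence (osemi Γt (.fm (.var p))) Δ → LBIZ Cand cut Δ (.var p) 1
  | botL (C : Ctx) (H : BI) : LBIZ Cand cut (C.fill (.fm .bot)) H 1
  | topR (Γ : Bunch) : LBIZ Cand cut Γ .top 1
  | mtopR (Γt : Option Bunch) {Δ : Bunch} :
      Essence (osemi Γt (.fm .mtop)) Δ → LBIZ Cand cut Δ .mtop 1
  | conjL {C : Ctx} {F G H n} :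
      LBIZ Cand cut (C.fill (.semi (.fm F) (.fm G))) H n →
      LBIZ Cand cut (C.fill (.fm (.conj F G))) H (n + 1)
  | conjR {Γ F G n m} :
      LBIZ Cand cut Γ F n → LBIZ Cand cut Γ G m →
      LBIZ Cand cut Γ (.conj F G) (max n m + 1)
  | disjL {C : Ctx} {F G H n m} :
      LBIZ Cand cut (C.fill (.fm F)) H n → LBIZ Cand cut (C.fill (.fm G)) H m →
      LBIZ Cand cut (C.fill (.fm (.disj F G))) H (max n m + 1)
  | disjR₁ {Γ F G n} : LBIZ Cand cut Γ F n → LBIZ Cand cut Γ (.disj F G) (n + 1)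
  | disjR₂ {Γ F G n} : LBIZ Cand cut Γ G n → LBIZ Cand cut Γ (.disj F G) (n + 1)
  | impL (Γt : Option Bunch) {F G : BI} {Δ : Bunch} {C : Ctx} {H n m} :
      Essence (osemi Γt (.fm (.imp F G))) Δ →
      LBIZ Cand cut Δ F n →
      LBIZ Cand cut (C.fill (.semi (.fm G) Δ)) H m →
      LBIZ Cand cut (C.fill Δ) H (max n m + 1)
  | impR {Γ F G n} :
      LBIZ Cand cut (.semi Γ (.fm F)) G n → LBIZ Cand cut Γ (.imp F G) (n + 1)
  | starL {C : Ctx} {F G H n} :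
      LBIZ Cand cut (C.fill (.comma (.fm F) (.fm G))) H n →
      LBIZ Cand cut (C.fill (.fm (.star F G))) H (n + 1)
  | starR {Γ' R₁ R₂ : Bunch} {F G n m} :
      (Cand Γ' R₁ R₂ ∨ Cand Γ' R₂ R₁) →
      LBIZ Cand cut R₁ F n → LBIZ Cand cut R₂ G m →
      LBIZ Cand cut Γ' (.star F G) (max n m + 1)
  | wandL (Γ'o Rej : Option Bunch) (Rei : Bunch) (Γt : Option Bunch)
      {F G : BI} {Δ : Bunch} {C : Ctx} {H n m} :
      Essence (osemi Γt (.fm (.wand F G))) Δ →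
      ((Γ'o = none ∧ Rei = .fm .mtop ∧ Rej = none) ∨
        (∃ Γ' Rj, Γ'o = some Γ' ∧ Rej = some Rj ∧
          (Cand Γ' Rei Rj ∨ Cand Γ' Rj Rei))) →
      LBIZ Cand cut Rei F n →
      LBIZ Cand cut (C.fill (.semi (ocomma Rej (.fm G)) (ocomma Γ'o Δ))) H m →
      LBIZ Cand cut (C.fill (ocomma Γ'o Δ)) H (max n m + 1)
  | wandR {Γ F G n} :
      LBIZ Cand cut (.comma Γ (.fm F)) G n → LBIZ Cand cut Γ (.wand F G) (n + 1)
  | equiv {Γ Γ' H n} : BunchEq Γ Γ' → LBIZ Cand cut Γ H n → LBIZ Cand cut Γ' H n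
  | cutRule {Γ₁ : Bunch} {F : BI} {C : Ctx} {G n m} :
      cut = true →
      LBIZ Cand cut Γ₁ F n → LBIZ Cand cut (C.fill (.fm F)) G m →
      LBIZ Cand cut (C.fill Γ₁) G (max n m + 1)

/-- LBIZ proper: candidate relation `Candidate`, no Cut. -/
abbrev LBIZc : Bunch → BI → Nat → Prop := LBIZ Candidate false

/-- The LBI sequent calculus (without Cut), parametrised by whether contraction
is available for arbitrary bunches (`full = true`) or only for single formulas. -/
inductive LBIg (full : Bool) : Bunch → BI → Prop
  | id (F : BI) : LBIg full (.fm F) F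
  | botL (C : Ctx) (H : BI) : LBIg full (C.fill (.fm .bot)) H
  | topR (Γ : Bunch) : LBIg full Γ .top
  | mtopR : LBIg full (.fm .mtop) .mtop
  | conjL {C : Ctx} {F G H} :
      LBIg full (C.fill (.semi (.fm F) (.fm G))) H →
      LBIg full (C.fill (.fm (.conj F G))) H
  | conjR {Γ F G} : LBIg full Γ F → LBIg full Γ G → LBIg full Γ (.conj F G)
  | disjL {C : Ctx} {F G H} :
      LBIg full (C.fill (.fm F)) H → LBIg full (C.fill (.fm G)) H →
      LBIg full (C.fill (.fm (.disj F G))) H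
  | disjR₁ {Γ F G} : LBIg full Γ F → LBIg full Γ (.disj F G)
  | disjR₂ {Γ F G} : LBIg full Γ G → LBIg full Γ (.disj F G)
  | impL {Γ₁ : Bunch} {C : Ctx} {F G H} :
      LBIg full Γ₁ F → LBIg full (C.fill (.semi Γ₁ (.fm G))) H →
      LBIg full (C.fill (.semi Γ₁ (.fm (.imp F G)))) H
  | impR {Γ F G} : LBIg full (.semi Γ (.fm F)) G → LBIg full Γ (.imp F G)
  | starL {C : Ctx} {F G H} :
      LBIg full (C.fill (.comma (.fm F) (.fm G))) H →
      LBIg full (C.fill (.fm (.star F G))) H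
  | starR {Γ₁ Γ₂ F G} :
      LBIg full Γ₁ F → LBIg full Γ₂ G → LBIg full (.comma Γ₁ Γ₂) (.star F G)
  | wandL {Γ₁ : Bunch} {C : Ctx} {F G H} :
      LBIg full Γ₁ F → LBIg full (C.fill (.fm G)) H →
      LBIg full (C.fill (.comma Γ₁ (.fm (.wand F G)))) H
  | wandR {Γ F G} : LBIg full (.comma Γ (.fm F)) G → LBIg full Γ (.wand F G)
  | wk {C : Ctx} {Γ₁ Γ₂ H} :
      LBIg full (C.fill Γ₁) H → LBIg full (C.fill (.semi Γ₁ Γ₂)) H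
  | ctr {C : Ctx} {Γ₁ H} :
      (full = true ∨ ∃ A, Γ₁ = .fm A) →
      LBIg full (C.fill (.semi Γ₁ Γ₁)) H → LBIg full (C.fill Γ₁) H
  | eqAnt1a {C : Ctx} {Γ₁ H} :
      LBIg full (C.fill (.semi Γ₁ (.fm .top))) H → LBIg full (C.fill Γ₁) H
  | eqAnt1b {C : Ctx} {Γ₁ H} :
      LBIg full (C.fill Γ₁) H → LBIg full (C.fill (.semi Γ₁ (.fm .top))) H
  | eqAnt2a {C : Ctx} {Γ₁ H} :
      LBIg full (C.fill (.comma Γ₁ (.fm .mtop))) H → LBIg full (C.fill Γ₁) H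
  | eqAnt2b {C : Ctx} {Γ₁ H} :
      LBIg full (C.fill Γ₁) H → LBIg full (C.fill (.comma Γ₁ (.fm .mtop))) H
  | equiv {Γ Γ' H} : BunchEq Γ Γ' → LBIg full Γ H → LBIg full Γ' H

/-- LBI with unrestricted (structural) contraction. -/
abbrev LBI : Bunch → BI → Prop := LBIg true

/-- One application of the LBI weakening rule Wk L on a sequent
(also allowing structural-congruence adjustments). -/
inductive WkStep : Bunch × BI → Bunch × BI → Prop
  | step (C : Ctx) (Δ Γ' : Bunch) (H : BI) :
      WkStep (C.fill Δ, H) (C.fill (.semi Δ Γ'), H)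
  | equiv {Γ₁ Γ₂ : Bunch} (H : BI) : BunchEq Γ₁ Γ₂ → WkStep (Γ₁, H) (Γ₂, H)

/-- One application of Wk L or of either direction of EqAnt₂ on a sequent. -/
inductive WkEq2Step : Bunch × BI → Bunch × BI → Prop
  | wk (C : Ctx) (Δ Γ' : Bunch) (H : BI) :
      WkEq2Step (C.fill Δ, H) (C.fill (.semi Δ Γ'), H)
  | eq2a (C : Ctx) (Γ₁ : Bunch) (H : BI) :
      WkEq2Step (C.fill (.comma Γ₁ (.fm .mtop)), H) (C.fill Γ₁, H)
  | eq2b (C : Ctx) (Γ₁ : Bunch) (H : BI) :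
      WkEq2Step (C.fill Γ₁, H) (C.fill (.comma Γ₁ (.fm .mtop)), H)
  | equiv {Γ₁ Γ₂ : Bunch} (H : BI) : BunchEq Γ₁ Γ₂ → WkEq2Step (Γ₁, H) (Γ₂, H)

/-- The preorder generated by weakening together with insertion of
multiplicative-unit components. -/
inductive WleM : Bunch → Bunch → Prop
  | ofEq {a b} : BunchEq a b → WleM a b
  | weak (C : Ctx) (Δ Γ' : Bunch) : WleM (C.fill Δ) (C.fill (.semi Δ Γ'))
  | munit (C : Ctx) (Δ : Bunch) : WleM (C.fill Δ) (C.fill (.comma Δ (.fm .mtop)))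
  | trans {a b c} : WleM a b → WleM b c → WleM a c


namespace ConjInv

/-- Replace some occurrences of the formula `F ∧ G` by the bunch `F; G`. -/
inductive Rep (F G : BI) : Bunch → Bunch → Prop
  | fm (A : BI) : Rep F G (.fm A) (.fm A)
  | repl : Rep F G (.fm (.conj F G)) (.semi (.fm F) (.fm G))
  | semi {a a' b b'} : Rep F G a a' → Rep F G b b' → Rep F G (.semi a b) (.semi a' b')
  | comma {a a' b b'} : Rep F G a a' → Rep F G b b' → Rep F G (.comma a b) (.comma a' b')

variable {F G : BI}

theorem Rep.rfl : ∀ a, Rep F G a a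
  | .fm A => .fm A
  | .semi a b => .semi (Rep.rfl a) (Rep.rfl b)
  | .comma a b => .comma (Rep.rfl a) (Rep.rfl b)

theorem repFillCongr : ∀ (C : Ctx) {X X'}, Rep F G X X' → Rep F G (C.fill X) (C.fill X')
  | .hole, _, _, h => h
  | .semiL C Γ, _, _, h => .semi (repFillCongr C h) (Rep.rfl Γ)
  | .semiR Γ C, _, _, h => .semi (Rep.rfl Γ) (repFillCongr C h)
  | .commaL C Γ, _, _, h => .comma (repFillCongr C h) (Rep.rfl Γ)
  | .commaR Γ C, _, _, h => .comma (Rep.rfl Γ) (repFillCongr C h)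

theorem repFillInv : ∀ (C : Ctx) {X y}, Rep F G (C.fill X) y →
    ∃ (C₂ : Ctx) (X' : Bunch), y = C₂.fill X' ∧ Rep F G X X' ∧
      ∀ Z Z', Rep F G Z Z' → Rep F G (C.fill Z) (C₂.fill Z') := by
  intro C
  induction C with
  | hole => intro X y h; exact ⟨.hole, y, rfl, h, fun _ _ hz => hz⟩
  | semiL C Γ ih =>
      intro X y h
      cases h with
      | semi h1 h2 =>
          obtain ⟨C₂, X', rfl, hX, T⟩ := ih h1
          exact ⟨.semiL C₂ _, X', rfl, hX, fun Z Z' hz => .semi (T _ _ hz) h2⟩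
  | semiR Γ C ih =>
      intro X y h
      cases h with
      | semi h1 h2 =>
          obtain ⟨C₂, X', rfl, hX, T⟩ := ih h2
          exact ⟨.semiR _ C₂, X', rfl, hX, fun Z Z' hz => .semi h1 (T _ _ hz)⟩
  | commaL C Γ ih =>
      intro X y h
      cases h with
      | comma h1 h2 =>
          obtain ⟨C₂, X', rfl, hX, T⟩ := ih h1
          exact ⟨.commaL C₂ _, X', rfl, hX, fun Z Z' hz => .comma (T _ _ hz) h2⟩
  | commaR Γ C ih =>
      intro X y h
      cases h with
      | comma h1 h2 =>
          obtain ⟨C₂, X', rfl, hX, T⟩ := ih h2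
          exact ⟨.commaR _ C₂, X', rfl, hX, fun Z Z' hz => .comma h1 (T _ _ hz)⟩

theorem bunchEq_rep {a b : Bunch} (h : BunchEq a b) :
    (∀ a', Rep F G a a' → ∃ b', Rep F G b b' ∧ BunchEq a' b') ∧
    (∀ b', Rep F G b b' → ∃ a', Rep F G a a' ∧ BunchEq a' b') := by
  induction h with
  | refl Γ => exact ⟨fun a' h => ⟨a', h, .refl _⟩, fun a' h => ⟨a', h, .refl _⟩⟩
  | symm _ ih =>
      refine ⟨fun b' h => ?_, fun a' h => ?_⟩
      · obtain ⟨a', h1, h2⟩ := ih.2 b' h; exact ⟨a', h1, h2.symm⟩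
      · obtain ⟨b', h1, h2⟩ := ih.1 a' h; exact ⟨b', h1, h2.symm⟩
  | trans _ _ ih1 ih2 =>
      refine ⟨fun a' h => ?_, fun c' h => ?_⟩
      · obtain ⟨b', h1, h2⟩ := ih1.1 a' h
        obtain ⟨c', h3, h4⟩ := ih2.1 b' h1
        exact ⟨c', h3, h2.trans h4⟩
      · obtain ⟨b', h1, h2⟩ := ih2.2 c' h
        obtain ⟨a', h3, h4⟩ := ih1.2 b' h1
        exact ⟨a', h3, h4.trans h2⟩
  | semiComm a b =>
      refine ⟨fun a' h => ?_, fun b' h => ?_⟩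
      · cases h with
        | semi h1 h2 => exact ⟨_, .semi h2 h1, .semiComm _ _⟩
      · cases h with
        | semi h1 h2 => exact ⟨_, .semi h2 h1, .semiComm _ _⟩
  | semiAssoc a b c =>
      refine ⟨fun a' h => ?_, fun b' h => ?_⟩
      · cases h with
        | semi hl h3 => cases hl with
          | semi h1 h2 => exact ⟨_, .semi h1 (.semi h2 h3), .semiAssoc _ _ _⟩
      · cases h with
        | semi h1 hr => cases hr with
          | semi h2 h3 => exact ⟨_, .semi (.semi h1 h2) h3, .semiAssoc _ _ _⟩
  | commaComm a b =>
      refine ⟨fun a' h => ?_, fun b' h => ?_⟩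
      · cases h with
        | comma h1 h2 => exact ⟨_, .comma h2 h1, .commaComm _ _⟩
      · cases h with
        | comma h1 h2 => exact ⟨_, .comma h2 h1, .commaComm _ _⟩
  | commaAssoc a b c =>
      refine ⟨fun a' h => ?_, fun b' h => ?_⟩
      · cases h with
        | comma hl h3 => cases hl with
          | comma h1 h2 => exact ⟨_, .comma h1 (.comma h2 h3), .commaAssoc _ _ _⟩
      · cases h with
        | comma h1 hr => cases hr with
          | comma h2 h3 => exact ⟨_, .comma (.comma h1 h2) h3, .commaAssoc _ _ _⟩
  | semiCongr _ _ ih1 ih2 =>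
      refine ⟨fun a' h => ?_, fun b' h => ?_⟩
      · cases h with
        | semi h1 h2 =>
            obtain ⟨x, hx1, hx2⟩ := ih1.1 _ h1
            obtain ⟨y, hy1, hy2⟩ := ih2.1 _ h2
            exact ⟨_, .semi hx1 hy1, .semiCongr hx2 hy2⟩
      · cases h with
        | semi h1 h2 =>
            obtain ⟨x, hx1, hx2⟩ := ih1.2 _ h1
            obtain ⟨y, hy1, hy2⟩ := ih2.2 _ h2
            exact ⟨_, .semi hx1 hy1, .semiCongr hx2 hy2⟩
  | commaCongr _ _ ih1 ih2 =>
      refine ⟨fun a' h => ?_, fun b' h => ?_⟩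
      · cases h with
        | comma h1 h2 =>
            obtain ⟨x, hx1, hx2⟩ := ih1.1 _ h1
            obtain ⟨y, hy1, hy2⟩ := ih2.1 _ h2
            exact ⟨_, .comma hx1 hy1, .commaCongr hx2 hy2⟩
      · cases h with
        | comma h1 h2 =>
            obtain ⟨x, hx1, hx2⟩ := ih1.2 _ h1
            obtain ⟨y, hy1, hy2⟩ := ih2.2 _ h2
            exact ⟨_, .comma hx1 hy1, .commaCongr hx2 hy2⟩

theorem wle_rep {a b : Bunch} (h : Wle a b) :
    ∀ b', Rep F G b b' → ∃ a', Rep F G a a' ∧ Wle a' b' := by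
  induction h with
  | ofEq h =>
      intro b' hb
      obtain ⟨a', h1, h2⟩ := (bunchEq_rep h).2 b' hb
      exact ⟨a', h1, .ofEq h2⟩
  | weak C Δ Γ' =>
      intro b' hb
      obtain ⟨C₂, X', rfl, hX, T⟩ := repFillInv C hb
      cases hX with
      | semi h1 h2 => exact ⟨C₂.fill _, T _ _ h1, .weak C₂ _ _⟩
  | trans _ _ ih1 ih2 =>
      intro c' hc
      obtain ⟨b', h1, h2⟩ := ih2 c' hc
      obtain ⟨a', h3, h4⟩ := ih1 b' h1
      exact ⟨a', h3, .trans h4 h2⟩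

theorem cand_rep {Γ Γ' R₁ R₂ : Bunch} (h : Candidate Γ R₁ R₂) (hr : Rep F G Γ Γ') :
    ∃ R₁' R₂', Rep F G R₁ R₁' ∧ Rep F G R₂ R₂' ∧ Candidate Γ' R₁' R₂' := by
  rcases h with ⟨hm, hw⟩ | hw
  · subst hm
    obtain ⟨R₁', h1, h2⟩ := wle_rep hw Γ' hr
    exact ⟨R₁', .fm .mtop, h1, Rep.fm _, Or.inl ⟨rfl, h2⟩⟩
  · obtain ⟨x, h1, h2⟩ := wle_rep hw Γ' hr
    cases h1 with
    | comma ha hb => exact ⟨_, _, ha, hb, Or.inr h2⟩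

theorem rep_mte : ∀ (Δ : Option Bunch) {M'}, Rep F G (mte Δ) M' → ∃ Δ', M' = mte Δ' := by
  intro Δ M' h
  cases Δ with
  | none =>
      simp only [mte] at h
      cases h with
      | fm => exact ⟨none, rfl⟩
  | some Δ =>
      simp only [mte] at h
      cases h with
      | semi h1 h2 => cases h1 with
        | fm => exact ⟨some _, rfl⟩

theorem essence_rep {a b : Bunch} (h : Essence a b) :
    ∀ b', Rep F G b b' → ∃ a', Rep F G a a' ∧ Essence a' b' := by
  induction h with
  | ofEq h =>
      intro b' hb
      obtain ⟨a', h1, h2⟩ := (bunchEq_rep h).2 b' hb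
      exact ⟨a', h1, .ofEq h2⟩
  | insert C Γ' Δ _ ih =>
      intro b' hb
      obtain ⟨C₂, X', rfl, hX, T⟩ := repFillInv C hb
      cases hX with
      | comma h1 h2 =>
          obtain ⟨Δ', rfl⟩ := rep_mte Δ h2
          obtain ⟨a', ha, he⟩ := ih _ (T _ _ h1)
          exact ⟨a', ha, .insert C₂ _ Δ' he⟩
  | insertSemi C Γ' Γ'' Δ _ ih =>
      intro b' hb
      obtain ⟨C₂, X', rfl, hX, T⟩ := repFillInv C hb
      cases hX with
      | semi hl h2 =>
          cases hl with
          | comma h1 hm =>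
              obtain ⟨Δ', rfl⟩ := rep_mte Δ hm
              obtain ⟨a', ha, he⟩ := ih _ (T _ _ (Rep.semi h1 h2))
              exact ⟨a', ha, .insertSemi C₂ _ _ Δ' he⟩
  | congr _ heq ih =>
      intro c' hc
      obtain ⟨b', h1, h2⟩ := (bunchEq_rep heq).2 c' hc
      obtain ⟨a', h3, h4⟩ := ih b' h1
      exact ⟨a', h3, .congr h4 h2⟩

theorem rep_fm_ne {A : BI} (h : A ≠ .conj F G) {y} (hr : Rep F G (.fm A) y) : y = .fm A := by
  cases hr with
  | fm => rfl
  | repl => exact absurd rfl h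

theorem rep_osemi {Γt : Option Bunch} {A : BI} (hA : A ≠ .conj F G) {a'}
    (h : Rep F G (osemi Γt (.fm A)) a') : ∃ Γt', a' = osemi Γt' (.fm A) := by
  cases Γt with
  | none =>
      simp only [osemi] at h
      exact ⟨none, rep_fm_ne hA h⟩
  | some Γt =>
      simp only [osemi] at h
      cases h with
      | semi h1 h2 => exact ⟨some _, by rw [rep_fm_ne hA h2]; rfl⟩

theorem lbiz_rep : ∀ {Γ H k}, LBIZ Candidate false Γ H k →
    ∀ Γ', Rep F G Γ Γ' → ∃ l, l ≤ k ∧ LBIZ Candidate false Γ' H l := by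
  intro Γ H k h
  induction h with
  | id Γt p he =>
      intro Γ' hr
      obtain ⟨a', ha, he'⟩ := essence_rep he Γ' hr
      obtain ⟨Γt', rfl⟩ := rep_osemi (by intro h; cases h) ha
      exact ⟨1, le_refl 1, .id Γt' p he'⟩
  | botL C H =>
      intro Γ' hr
      obtain ⟨C₂, X', rfl, hX, T⟩ := repFillInv C hr
      rw [rep_fm_ne (by intro h; cases h) hX]
      exact ⟨1, le_refl 1, .botL C₂ H⟩
  | topR Γ => intro Γ' hr; exact ⟨1, le_refl 1, .topR Γ'⟩
  | mtopR Γt he =>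
      intro Γ' hr
      obtain ⟨a', ha, he'⟩ := essence_rep he Γ' hr
      obtain ⟨Γt', rfl⟩ := rep_osemi (by intro h; cases h) ha
      exact ⟨1, le_refl 1, .mtopR Γt' he'⟩
  | conjL h ih =>
      intro Γ' hr
      obtain ⟨C₂, X', rfl, hX, T⟩ := repFillInv _ hr
      cases hX with
      | fm =>
          obtain ⟨l, hl, hd⟩ := ih _ (T _ _ (Rep.semi (Rep.rfl _) (Rep.rfl _)))
          exact ⟨l + 1, Nat.succ_le_succ hl, .conjL hd⟩
      | repl =>
          obtain ⟨l, hl, hd⟩ := ih _ (T _ _ (Rep.rfl _))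
          exact ⟨l, Nat.le_succ_of_le hl, hd⟩
  | conjR h1 h2 ih1 ih2 =>
      intro Γ' hr
      obtain ⟨l1, hl1, d1⟩ := ih1 Γ' hr
      obtain ⟨l2, hl2, d2⟩ := ih2 Γ' hr
      exact ⟨max l1 l2 + 1, Nat.succ_le_succ (max_le_max hl1 hl2), .conjR d1 d2⟩
  | disjL h1 h2 ih1 ih2 =>
      intro Γ' hr
      obtain ⟨C₂, X', rfl, hX, T⟩ := repFillInv _ hr
      cases hX with
      | fm =>
          obtain ⟨l1, hl1, d1⟩ := ih1 _ (T _ _ (Rep.rfl (.fm _)))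
          obtain ⟨l2, hl2, d2⟩ := ih2 _ (T _ _ (Rep.rfl (.fm _)))
          exact ⟨max l1 l2 + 1, Nat.succ_le_succ (max_le_max hl1 hl2), .disjL d1 d2⟩
  | disjR₁ h ih =>
      intro Γ' hr
      obtain ⟨l, hl, d⟩ := ih Γ' hr
      exact ⟨l + 1, Nat.succ_le_succ hl, .disjR₁ d⟩
  | disjR₂ h ih =>
      intro Γ' hr
      obtain ⟨l, hl, d⟩ := ih Γ' hr
      exact ⟨l + 1, Nat.succ_le_succ hl, .disjR₂ d⟩
  | impL Γt he h1 h2 ih1 ih2 =>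
      intro Γ' hr
      obtain ⟨C₂, Δ', rfl, hΔ, T⟩ := repFillInv _ hr
      obtain ⟨a', ha, he'⟩ := essence_rep he Δ' hΔ
      obtain ⟨Γt', rfl⟩ := rep_osemi (by intro h; cases h) ha
      obtain ⟨l1, hl1, d1⟩ := ih1 Δ' hΔ
      obtain ⟨l2, hl2, d2⟩ := ih2 _ (T _ _ (Rep.semi (Rep.rfl (.fm _)) hΔ))
      exact ⟨max l1 l2 + 1, Nat.succ_le_succ (max_le_max hl1 hl2), .impL Γt' he' d1 d2⟩
  | impR h ih =>
      intro Γ' hr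
      obtain ⟨l, hl, d⟩ := ih _ (Rep.semi hr (Rep.rfl _))
      exact ⟨l + 1, Nat.succ_le_succ hl, .impR d⟩
  | starL h ih =>
      intro Γ' hr
      obtain ⟨C₂, X', rfl, hX, T⟩ := repFillInv _ hr
      cases hX with
      | fm =>
          obtain ⟨l, hl, d⟩ := ih _ (T _ _ (Rep.comma (Rep.rfl _) (Rep.rfl _)))
          exact ⟨l + 1, Nat.succ_le_succ hl, .starL d⟩
  | starR hc h1 h2 ih1 ih2 =>
      intro Γ' hr
      rcases hc with hc | hc
      · obtain ⟨R₁', R₂', hr1, hr2, hc'⟩ := cand_rep hc hr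
        obtain ⟨l1, hl1, d1⟩ := ih1 _ hr1
        obtain ⟨l2, hl2, d2⟩ := ih2 _ hr2
        exact ⟨max l1 l2 + 1, Nat.succ_le_succ (max_le_max hl1 hl2), .starR (Or.inl hc') d1 d2⟩
      · obtain ⟨R₂', R₁', hr2, hr1, hc'⟩ := cand_rep hc hr
        obtain ⟨l1, hl1, d1⟩ := ih1 _ hr1
        obtain ⟨l2, hl2, d2⟩ := ih2 _ hr2
        exact ⟨max l1 l2 + 1, Nat.succ_le_succ (max_le_max hl1 hl2), .starR (Or.inr hc') d1 d2⟩
  | wandL Γ'o Rej Rei Γt he hside h1 h2 ih1 ih2 =>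
      intro y hr
      obtain ⟨C₂, X', rfl, hX, T⟩ := repFillInv _ hr
      rcases hside with ⟨rfl, rfl, rfl⟩ | ⟨Γ0, Rj, rfl, rfl, hc⟩
      · simp only [ocomma] at hX
        obtain ⟨a', ha, he'⟩ := essence_rep he X' hX
        obtain ⟨Γt', rfl⟩ := rep_osemi (by intro h; cases h) ha
        obtain ⟨l1, hl1, d1⟩ := ih1 _ (Rep.rfl (.fm .mtop))
        obtain ⟨l2, hl2, d2⟩ := ih2 _ (T _ _ (Rep.semi (Rep.rfl (.fm _)) hX))
        exact ⟨max l1 l2 + 1, Nat.succ_le_succ (max_le_max hl1 hl2),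
          .wandL none none (.fm .mtop) Γt' he' (Or.inl ⟨rfl, rfl, rfl⟩) d1 d2⟩
      · simp only [ocomma] at hX
        cases hX with
        | comma hΓ0 hΔ =>
            obtain ⟨a', ha, he'⟩ := essence_rep he _ hΔ
            obtain ⟨Γt', rfl⟩ := rep_osemi (by intro h; cases h) ha
            rcases hc with hc | hc
            · obtain ⟨Rei', Rj', hri, hrj, hc'⟩ := cand_rep hc hΓ0
              obtain ⟨l1, hl1, d1⟩ := ih1 _ hri
              obtain ⟨l2, hl2, d2⟩ := ih2 _
                (T _ _ (Rep.semi (Rep.comma hrj (Rep.rfl (.fm _))) (Rep.comma hΓ0 hΔ)))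
              exact ⟨max l1 l2 + 1, Nat.succ_le_succ (max_le_max hl1 hl2),
                .wandL (some _) (some Rj') Rei' Γt' he'
                  (Or.inr ⟨_, Rj', rfl, rfl, Or.inl hc'⟩) d1 d2⟩
            · obtain ⟨Rj', Rei', hrj, hri, hc'⟩ := cand_rep hc hΓ0
              obtain ⟨l1, hl1, d1⟩ := ih1 _ hri
              obtain ⟨l2, hl2, d2⟩ := ih2 _
                (T _ _ (Rep.semi (Rep.comma hrj (Rep.rfl (.fm _))) (Rep.comma hΓ0 hΔ)))
              exact ⟨max l1 l2 + 1, Nat.succ_le_succ (max_le_max hl1 hl2),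
                .wandL (some _) (some Rj') Rei' Γt' he'
                  (Or.inr ⟨_, Rj', rfl, rfl, Or.inr hc'⟩) d1 d2⟩
  | wandR h ih =>
      intro Γ' hr
      obtain ⟨l, hl, d⟩ := ih _ (Rep.comma hr (Rep.rfl _))
      exact ⟨l + 1, Nat.succ_le_succ hl, .wandR d⟩
  | equiv heq _ ih =>
      intro y hr
      obtain ⟨x, h1, h2⟩ := (bunchEq_rep heq).2 y hr
      obtain ⟨l, hl, d⟩ := ih x h1
      exact ⟨l, hl, .equiv h2 d⟩
  | cutRule hcut _ _ _ _ => exact absurd hcut (by simp)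

end ConjInv

/-- ∧L is depth-preserving invertible in LBIZ. -/
theorem lbiz_conjL_invertible (C : Ctx) (F G H : BI) (k : Nat)
    (h : LBIZc (C.fill (.fm (.conj F G))) H k) :
    ∃ l ≤ k, LBIZc (C.fill (.semi (.fm F) (.fm G))) H l := by
  obtain ⟨l, hl, d⟩ := ConjInv.lbiz_rep h _ (ConjInv.repFillCongr C ConjInv.Rep.repl)
  exact ⟨l, hl, d⟩
end

section
/- The left disjunction rule is depth-preserving invertible in LBIZ: if Γ(F₁ ∨ F₂) ⊢ H is derivable in LBIZ with derivation depth at most k, then both Γ(F₁) ⊢ H and Γ(F₂) ⊢ H are derivable in LBIZ with derivation depth at most k. -/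

def Ctx.comp : Ctx → Ctx → Ctx
  | .hole, D => D
  | .semiL C b, D => .semiL (C.comp D) b
  | .semiR a C, D => .semiR a (C.comp D)
  | .commaL C b, D => .commaL (C.comp D) b
  | .commaR a C, D => .commaR a (C.comp D)

theorem Ctx.fill_comp (C D : Ctx) (X : Bunch) :
    (C.comp D).fill X = C.fill (D.fill X) := by
  induction C <;> simp [Ctx.comp, Ctx.fill, *]

/-- Splitting a bunch that is simultaneously a filled context and a context
filled with a formula leaf. -/
theorem fill_split : ∀ (C₀ : Ctx) (Y : Bunch) (C : Ctx) (A : BI),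
    C₀.fill Y = C.fill (.fm A) →
    (∃ D : Ctx, C = C₀.comp D ∧ Y = D.fill (.fm A)) ∨
    (∃ g e : Bunch → Ctx, g (.fm A) = C₀ ∧ e Y = C ∧
      ∀ X Z : Bunch, (g X).fill Z = (e Z).fill X) := by
  intro C₀
  induction C₀ with
  | hole => intro Y C A h; exact .inl ⟨C, rfl, h⟩
  | semiL C₁ Γ ih =>
    intro Y C A h
    cases C with
    | hole => simp [Ctx.fill] at h
    | semiL C₂ Γ₂ =>
      simp only [Ctx.fill, Bunch.semi.injEq] at h
      obtain ⟨h1, rfl⟩ := h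
      rcases ih Y C₂ A h1 with ⟨D, rfl, hY⟩ | ⟨g, e, hg, he, hge⟩
      · exact .inl ⟨D, rfl, hY⟩
      · exact .inr ⟨fun X => .semiL (g X) Γ, fun Z => .semiL (e Z) Γ,
          by simp only [hg], by simp only [he], fun X Z => by simp [Ctx.fill, hge]⟩
    | semiR Γ₂ C₂ =>
      simp only [Ctx.fill, Bunch.semi.injEq] at h
      obtain ⟨h1, h2⟩ := h
      refine .inr ⟨fun X => .semiL C₁ (C₂.fill X), fun Z => .semiR (C₁.fill Z) C₂,
        by simp only [h2], by simp only [h1], fun X Z => by simp [Ctx.fill]⟩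
    | commaL C₂ Γ₂ => simp [Ctx.fill] at h
    | commaR Γ₂ C₂ => simp [Ctx.fill] at h
  | semiR Γ C₁ ih =>
    intro Y C A h
    cases C with
    | hole => simp [Ctx.fill] at h
    | semiR Γ₂ C₂ =>
      simp only [Ctx.fill, Bunch.semi.injEq] at h
      obtain ⟨rfl, h1⟩ := h
      rcases ih Y C₂ A h1 with ⟨D, rfl, hY⟩ | ⟨g, e, hg, he, hge⟩
      · exact .inl ⟨D, rfl, hY⟩
      · exact .inr ⟨fun X => .semiR Γ (g X), fun Z => .semiR Γ (e Z),
          by simp only [hg], by simp only [he], fun X Z => by simp [Ctx.fill, hge]⟩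
    | semiL C₂ Γ₂ =>
      simp only [Ctx.fill, Bunch.semi.injEq] at h
      obtain ⟨h1, h2⟩ := h
      refine .inr ⟨fun X => .semiR (C₂.fill X) C₁, fun Z => .semiL C₂ (C₁.fill Z),
        by simp only [h1], by simp only [h2], fun X Z => by simp [Ctx.fill]⟩
    | commaL C₂ Γ₂ => simp [Ctx.fill] at h
    | commaR Γ₂ C₂ => simp [Ctx.fill] at h
  | commaL C₁ Γ ih =>
    intro Y C A h
    cases C with
    | hole => simp [Ctx.fill] at h
    | commaL C₂ Γ₂ =>
      simp only [Ctx.fill, Bunch.comma.injEq] at h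
      obtain ⟨h1, rfl⟩ := h
      rcases ih Y C₂ A h1 with ⟨D, rfl, hY⟩ | ⟨g, e, hg, he, hge⟩
      · exact .inl ⟨D, rfl, hY⟩
      · exact .inr ⟨fun X => .commaL (g X) Γ, fun Z => .commaL (e Z) Γ,
          by simp only [hg], by simp only [he], fun X Z => by simp [Ctx.fill, hge]⟩
    | commaR Γ₂ C₂ =>
      simp only [Ctx.fill, Bunch.comma.injEq] at h
      obtain ⟨h1, h2⟩ := h
      refine .inr ⟨fun X => .commaL C₁ (C₂.fill X), fun Z => .commaR (C₁.fill Z) C₂,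
        by simp only [h2], by simp only [h1], fun X Z => by simp [Ctx.fill]⟩
    | semiL C₂ Γ₂ => simp [Ctx.fill] at h
    | semiR Γ₂ C₂ => simp [Ctx.fill] at h
  | commaR Γ C₁ ih =>
    intro Y C A h
    cases C with
    | hole => simp [Ctx.fill] at h
    | commaR Γ₂ C₂ =>
      simp only [Ctx.fill, Bunch.comma.injEq] at h
      obtain ⟨rfl, h1⟩ := h
      rcases ih Y C₂ A h1 with ⟨D, rfl, hY⟩ | ⟨g, e, hg, he, hge⟩
      · exact .inl ⟨D, rfl, hY⟩
      · exact .inr ⟨fun X => .commaR Γ (g X), fun Z => .commaR Γ (e Z),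
          by simp only [hg], by simp only [he], fun X Z => by simp [Ctx.fill, hge]⟩
    | commaL C₂ Γ₂ =>
      simp only [Ctx.fill, Bunch.comma.injEq] at h
      obtain ⟨h1, h2⟩ := h
      refine .inr ⟨fun X => .commaR (C₂.fill X) C₁, fun Z => .commaL C₂ (C₁.fill Z),
        by simp only [h1], by simp only [h2], fun X Z => by simp [Ctx.fill]⟩
    | semiL C₂ Γ₂ => simp [Ctx.fill] at h
    | semiR Γ₂ C₂ => simp [Ctx.fill] at h
/-- Tracking a formula-leaf position across structural congruence. -/
theorem bunchEq_subst {a b : Bunch} (h : BunchEq a b) :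
    (∀ (C : Ctx) (A : BI), b = C.fill (.fm A) →
      ∃ C' : Ctx, a = C'.fill (.fm A) ∧ ∀ X, BunchEq (C'.fill X) (C.fill X)) ∧
    (∀ (C : Ctx) (A : BI), a = C.fill (.fm A) →
      ∃ C' : Ctx, b = C'.fill (.fm A) ∧ ∀ X, BunchEq (C'.fill X) (C.fill X)) := by
  induction h with
  | refl Γ =>
    exact ⟨fun C A h => ⟨C, h, fun X => .refl _⟩, fun C A h => ⟨C, h, fun X => .refl _⟩⟩
  | symm _ ih => exact ⟨ih.2, ih.1⟩
  | trans _ _ ih₁ ih₂ =>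
    constructor
    · intro C A h
      obtain ⟨C'', hb, hBE⟩ := ih₂.1 C A h
      obtain ⟨C', ha, hBE'⟩ := ih₁.1 C'' A hb
      exact ⟨C', ha, fun X => .trans (hBE' X) (hBE X)⟩
    · intro C A h
      obtain ⟨C'', hb, hBE⟩ := ih₁.2 C A h
      obtain ⟨C', ha, hBE'⟩ := ih₂.2 C'' A hb
      exact ⟨C', ha, fun X => .trans (hBE' X) (hBE X)⟩
  | semiComm a b =>
    constructor
    · intro C A h
      cases C with
      | hole => simp [Ctx.fill] at h
      | semiL C₁ Γ =>
        simp only [Ctx.fill, Bunch.semi.injEq] at h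
        obtain ⟨h1, rfl⟩ := h
        exact ⟨.semiR a C₁, by simp [Ctx.fill, h1], fun X => .semiComm _ _⟩
      | semiR Γ C₁ =>
        simp only [Ctx.fill, Bunch.semi.injEq] at h
        obtain ⟨rfl, h1⟩ := h
        exact ⟨.semiL C₁ b, by simp [Ctx.fill, h1], fun X => .semiComm _ _⟩
      | commaL C₁ Γ => simp [Ctx.fill] at h
      | commaR Γ C₁ => simp [Ctx.fill] at h
    · intro C A h
      cases C with
      | hole => simp [Ctx.fill] at h
      | semiL C₁ Γ =>
        simp only [Ctx.fill, Bunch.semi.injEq] at h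
        obtain ⟨h1, rfl⟩ := h
        exact ⟨.semiR b C₁, by simp [Ctx.fill, h1], fun X => .semiComm _ _⟩
      | semiR Γ C₁ =>
        simp only [Ctx.fill, Bunch.semi.injEq] at h
        obtain ⟨rfl, h1⟩ := h
        exact ⟨.semiL C₁ a, by simp [Ctx.fill, h1], fun X => .semiComm _ _⟩
      | commaL C₁ Γ => simp [Ctx.fill] at h
      | commaR Γ C₁ => simp [Ctx.fill] at h
  | commaComm a b =>
    constructor
    · intro C A h
      cases C with
      | hole => simp [Ctx.fill] at h
      | commaL C₁ Γ =>
        simp only [Ctx.fill, Bunch.comma.injEq] at h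
        obtain ⟨h1, rfl⟩ := h
        exact ⟨.commaR a C₁, by simp [Ctx.fill, h1], fun X => .commaComm _ _⟩
      | commaR Γ C₁ =>
        simp only [Ctx.fill, Bunch.comma.injEq] at h
        obtain ⟨rfl, h1⟩ := h
        exact ⟨.commaL C₁ b, by simp [Ctx.fill, h1], fun X => .commaComm _ _⟩
      | semiL C₁ Γ => simp [Ctx.fill] at h
      | semiR Γ C₁ => simp [Ctx.fill] at h
    · intro C A h
      cases C with
      | hole => simp [Ctx.fill] at h
      | commaL C₁ Γ =>
        simp only [Ctx.fill, Bunch.comma.injEq] at h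
        obtain ⟨h1, rfl⟩ := h
        exact ⟨.commaR b C₁, by simp [Ctx.fill, h1], fun X => .commaComm _ _⟩
      | commaR Γ C₁ =>
        simp only [Ctx.fill, Bunch.comma.injEq] at h
        obtain ⟨rfl, h1⟩ := h
        exact ⟨.commaL C₁ a, by simp [Ctx.fill, h1], fun X => .commaComm _ _⟩
      | semiL C₁ Γ => simp [Ctx.fill] at h
      | semiR Γ C₁ => simp [Ctx.fill] at h
  | semiAssoc a b c =>
    constructor
    · intro C A h
      cases C with
      | hole => simp [Ctx.fill] at h
      | semiL C₁ Γ =>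
        simp only [Ctx.fill, Bunch.semi.injEq] at h
        obtain ⟨h1, rfl⟩ := h
        exact ⟨.semiL (.semiL C₁ b) c, by simp [Ctx.fill, h1], fun X => .semiAssoc _ _ _⟩
      | semiR Γ C₁ =>
        simp only [Ctx.fill, Bunch.semi.injEq] at h
        obtain ⟨rfl, h1⟩ := h
        cases C₁ with
        | hole => simp [Ctx.fill] at h1
        | semiL C₂ Γ₂ =>
          simp only [Ctx.fill, Bunch.semi.injEq] at h1
          obtain ⟨h2, rfl⟩ := h1
          exact ⟨.semiL (.semiR a C₂) c, by simp [Ctx.fill, h2], fun X => .semiAssoc _ _ _⟩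
        | semiR Γ₂ C₂ =>
          simp only [Ctx.fill, Bunch.semi.injEq] at h1
          obtain ⟨rfl, h2⟩ := h1
          exact ⟨.semiR (.semi a b) C₂, by simp [Ctx.fill, h2], fun X => .semiAssoc _ _ _⟩
        | commaL C₂ Γ₂ => simp [Ctx.fill] at h1
        | commaR Γ₂ C₂ => simp [Ctx.fill] at h1
      | commaL C₁ Γ => simp [Ctx.fill] at h
      | commaR Γ C₁ => simp [Ctx.fill] at h
    · intro C A h
      cases C with
      | hole => simp [Ctx.fill] at h
      | semiL C₁ Γ =>
        simp only [Ctx.fill, Bunch.semi.injEq] at h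
        obtain ⟨h1, rfl⟩ := h
        cases C₁ with
        | hole => simp [Ctx.fill] at h1
        | semiL C₂ Γ₂ =>
          simp only [Ctx.fill, Bunch.semi.injEq] at h1
          obtain ⟨h2, rfl⟩ := h1
          exact ⟨.semiL C₂ (.semi b c), by simp [Ctx.fill, h2], fun X => .symm (.semiAssoc _ _ _)⟩
        | semiR Γ₂ C₂ =>
          simp only [Ctx.fill, Bunch.semi.injEq] at h1
          obtain ⟨rfl, h2⟩ := h1
          exact ⟨.semiR a (.semiL C₂ c), by simp [Ctx.fill, h2], fun X => .symm (.semiAssoc _ _ _)⟩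
        | commaL C₂ Γ₂ => simp [Ctx.fill] at h1
        | commaR Γ₂ C₂ => simp [Ctx.fill] at h1
      | semiR Γ C₁ =>
        simp only [Ctx.fill, Bunch.semi.injEq] at h
        obtain ⟨rfl, h1⟩ := h
        exact ⟨.semiR a (.semiR b C₁), by simp [Ctx.fill, h1], fun X => .symm (.semiAssoc _ _ _)⟩
      | commaL C₁ Γ => simp [Ctx.fill] at h
      | commaR Γ C₁ => simp [Ctx.fill] at h
  | commaAssoc a b c =>
    constructor
    · intro C A h
      cases C with
      | hole => simp [Ctx.fill] at h
      | commaL C₁ Γ =>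
        simp only [Ctx.fill, Bunch.comma.injEq] at h
        obtain ⟨h1, rfl⟩ := h
        exact ⟨.commaL (.commaL C₁ b) c, by simp [Ctx.fill, h1], fun X => .commaAssoc _ _ _⟩
      | commaR Γ C₁ =>
        simp only [Ctx.fill, Bunch.comma.injEq] at h
        obtain ⟨rfl, h1⟩ := h
        cases C₁ with
        | hole => simp [Ctx.fill] at h1
        | commaL C₂ Γ₂ =>
          simp only [Ctx.fill, Bunch.comma.injEq] at h1
          obtain ⟨h2, rfl⟩ := h1
          exact ⟨.commaL (.commaR a C₂) c, by simp [Ctx.fill, h2], fun X => .commaAssoc _ _ _⟩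
        | commaR Γ₂ C₂ =>
          simp only [Ctx.fill, Bunch.comma.injEq] at h1
          obtain ⟨rfl, h2⟩ := h1
          exact ⟨.commaR (.comma a b) C₂, by simp [Ctx.fill, h2], fun X => .commaAssoc _ _ _⟩
        | semiL C₂ Γ₂ => simp [Ctx.fill] at h1
        | semiR Γ₂ C₂ => simp [Ctx.fill] at h1
      | semiL C₁ Γ => simp [Ctx.fill] at h
      | semiR Γ C₁ => simp [Ctx.fill] at h
    · intro C A h
      cases C with
      | hole => simp [Ctx.fill] at h
      | commaL C₁ Γ =>
        simp only [Ctx.fill, Bunch.comma.injEq] at h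
        obtain ⟨h1, rfl⟩ := h
        cases C₁ with
        | hole => simp [Ctx.fill] at h1
        | commaL C₂ Γ₂ =>
          simp only [Ctx.fill, Bunch.comma.injEq] at h1
          obtain ⟨h2, rfl⟩ := h1
          exact ⟨.commaL C₂ (.comma b c), by simp [Ctx.fill, h2], fun X => .symm (.commaAssoc _ _ _)⟩
        | commaR Γ₂ C₂ =>
          simp only [Ctx.fill, Bunch.comma.injEq] at h1
          obtain ⟨rfl, h2⟩ := h1
          exact ⟨.commaR a (.commaL C₂ c), by simp [Ctx.fill, h2], fun X => .symm (.commaAssoc _ _ _)⟩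
        | semiL C₂ Γ₂ => simp [Ctx.fill] at h1
        | semiR Γ₂ C₂ => simp [Ctx.fill] at h1
      | commaR Γ C₁ =>
        simp only [Ctx.fill, Bunch.comma.injEq] at h
        obtain ⟨rfl, h1⟩ := h
        exact ⟨.commaR a (.commaR b C₁), by simp [Ctx.fill, h1], fun X => .symm (.commaAssoc _ _ _)⟩
      | semiL C₁ Γ => simp [Ctx.fill] at h
      | semiR Γ C₁ => simp [Ctx.fill] at h
  | semiCongr h₁ h₂ ih₁ ih₂ =>
    constructor
    · intro C A h
      cases C with
      | hole => simp [Ctx.fill] at h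
      | semiL C₁ Γ =>
        simp only [Ctx.fill, Bunch.semi.injEq] at h
        obtain ⟨hh, rfl⟩ := h
        obtain ⟨C', ha, hBE⟩ := ih₁.1 C₁ A hh
        exact ⟨.semiL C' _, by simp [Ctx.fill, ha],
          fun X => .semiCongr (hBE X) h₂⟩
      | semiR Γ C₁ =>
        simp only [Ctx.fill, Bunch.semi.injEq] at h
        obtain ⟨rfl, hh⟩ := h
        obtain ⟨C', ha, hBE⟩ := ih₂.1 C₁ A hh
        exact ⟨.semiR _ C', by simp [Ctx.fill, ha],
          fun X => .semiCongr h₁ (hBE X)⟩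
      | commaL C₁ Γ => simp [Ctx.fill] at h
      | commaR Γ C₁ => simp [Ctx.fill] at h
    · intro C A h
      cases C with
      | hole => simp [Ctx.fill] at h
      | semiL C₁ Γ =>
        simp only [Ctx.fill, Bunch.semi.injEq] at h
        obtain ⟨hh, rfl⟩ := h
        obtain ⟨C', ha, hBE⟩ := ih₁.2 C₁ A hh
        exact ⟨.semiL C' _, by simp [Ctx.fill, ha],
          fun X => .semiCongr (hBE X) (BunchEq.symm h₂)⟩
      | semiR Γ C₁ =>
        simp only [Ctx.fill, Bunch.semi.injEq] at h
        obtain ⟨rfl, hh⟩ := h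
        obtain ⟨C', ha, hBE⟩ := ih₂.2 C₁ A hh
        exact ⟨.semiR _ C', by simp [Ctx.fill, ha],
          fun X => .semiCongr (BunchEq.symm h₁) (hBE X)⟩
      | commaL C₁ Γ => simp [Ctx.fill] at h
      | commaR Γ C₁ => simp [Ctx.fill] at h
  | commaCongr h₁ h₂ ih₁ ih₂ =>
    constructor
    · intro C A h
      cases C with
      | hole => simp [Ctx.fill] at h
      | commaL C₁ Γ =>
        simp only [Ctx.fill, Bunch.comma.injEq] at h
        obtain ⟨hh, rfl⟩ := h
        obtain ⟨C', ha, hBE⟩ := ih₁.1 C₁ A hh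
        exact ⟨.commaL C' _, by simp [Ctx.fill, ha],
          fun X => .commaCongr (hBE X) h₂⟩
      | commaR Γ C₁ =>
        simp only [Ctx.fill, Bunch.comma.injEq] at h
        obtain ⟨rfl, hh⟩ := h
        obtain ⟨C', ha, hBE⟩ := ih₂.1 C₁ A hh
        exact ⟨.commaR _ C', by simp [Ctx.fill, ha],
          fun X => .commaCongr h₁ (hBE X)⟩
      | semiL C₁ Γ => simp [Ctx.fill] at h
      | semiR Γ C₁ => simp [Ctx.fill] at h
    · intro C A h
      cases C with
      | hole => simp [Ctx.fill] at h
      | commaL C₁ Γ =>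
        simp only [Ctx.fill, Bunch.comma.injEq] at h
        obtain ⟨hh, rfl⟩ := h
        obtain ⟨C', ha, hBE⟩ := ih₁.2 C₁ A hh
        exact ⟨.commaL C' _, by simp [Ctx.fill, ha],
          fun X => .commaCongr (hBE X) (BunchEq.symm h₂)⟩
      | commaR Γ C₁ =>
        simp only [Ctx.fill, Bunch.comma.injEq] at h
        obtain ⟨rfl, hh⟩ := h
        obtain ⟨C', ha, hBE⟩ := ih₂.2 C₁ A hh
        exact ⟨.commaR _ C', by simp [Ctx.fill, ha],
          fun X => .commaCongr (BunchEq.symm h₁) (hBE X)⟩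
      | semiL C₁ Γ => simp [Ctx.fill] at h
      | semiR Γ C₁ => simp [Ctx.fill] at h
/-- Tracking a formula-leaf position across the weakening preorder. -/
theorem wle_subst {a b : Bunch} (h : Wle a b) :
    ∀ (C : Ctx) (A : BI), b = C.fill (.fm A) →
      (∃ C' : Ctx, a = C'.fill (.fm A) ∧ ∀ X, Wle (C'.fill X) (C.fill X)) ∨
      (∀ X, Wle a (C.fill X)) := by
  induction h with
  | ofEq hBE =>
    intro C A h
    obtain ⟨C', ha, hb⟩ := (bunchEq_subst hBE).1 C A h
    exact .inl ⟨C', ha, fun X => .ofEq (hb X)⟩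
  | weak C₀ Δ Γ' =>
    intro C A h
    rcases fill_split C₀ (.semi Δ Γ') C A h with ⟨D, rfl, hD⟩ | ⟨g, e, hg, he, hge⟩
    · cases D with
      | hole => simp [Ctx.fill] at hD
      | semiL D₁ y =>
        simp only [Ctx.fill, Bunch.semi.injEq] at hD
        obtain ⟨hD1, rfl⟩ := hD
        refine .inl ⟨C₀.comp D₁, by rw [Ctx.fill_comp, ← hD1], fun X => ?_⟩
        rw [Ctx.fill_comp, Ctx.fill_comp]
        exact Wle.weak C₀ (D₁.fill X) Γ'
      | semiR y D₁ =>
        simp only [Ctx.fill, Bunch.semi.injEq] at hD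
        obtain ⟨rfl, hD1⟩ := hD
        refine .inr fun X => ?_
        rw [Ctx.fill_comp]
        exact Wle.weak C₀ Δ (D₁.fill X)
      | commaL D₁ y => simp [Ctx.fill] at hD
      | commaR y D₁ => simp [Ctx.fill] at hD
    · refine .inl ⟨e Δ, by rw [← hge, hg], fun X => ?_⟩
      rw [← he, ← hge, ← hge]
      exact Wle.weak (g X) Δ Γ'
  | trans h₁ h₂ ih₁ ih₂ =>
    intro C A h
    rcases ih₂ C A h with ⟨C'', hb, hW⟩ | hW
    · rcases ih₁ C'' A hb with ⟨C', ha, hW'⟩ | hW'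
      · exact .inl ⟨C', ha, fun X => .trans (hW' X) (hW X)⟩
      · exact .inr fun X => .trans (hW' X) (hW X)
    · exact .inr fun X => .trans h₁ (hW X)

/-- Tracking a formula-leaf position across the candidate relation. -/
theorem candidate_subst {Γ' R₁ R₂ : Bunch} (h : Candidate Γ' R₁ R₂)
    (C : Ctx) (A : BI) (hΓ : Γ' = C.fill (.fm A)) :
    (∃ C₁ : Ctx, R₁ = C₁.fill (.fm A) ∧ ∀ X, Candidate (C.fill X) (C₁.fill X) R₂) ∨
    (∃ C₂ : Ctx, R₂ = C₂.fill (.fm A) ∧ ∀ X, Candidate (C.fill X) R₁ (C₂.fill X)) ∨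
    (∀ X, Candidate (C.fill X) R₁ R₂) := by
  rcases h with ⟨hR₂, hW⟩ | hW
  · rcases wle_subst hW C A hΓ with ⟨C₁, hR₁, hW'⟩ | hW'
    · exact .inl ⟨C₁, hR₁, fun X => .inl ⟨hR₂, hW' X⟩⟩
    · exact .inr (.inr fun X => .inl ⟨hR₂, hW' X⟩)
  · rcases wle_subst hW C A hΓ with ⟨C', hR, hW'⟩ | hW'
    · cases C' with
      | hole => simp [Ctx.fill] at hR
      | commaL C₁ y =>
        simp only [Ctx.fill, Bunch.comma.injEq] at hR
        obtain ⟨hR1, rfl⟩ := hR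
        refine .inl ⟨C₁, hR1, fun X => .inr ?_⟩
        have := hW' X
        simpa [Ctx.fill] using this
      | commaR y C₂ =>
        simp only [Ctx.fill, Bunch.comma.injEq] at hR
        obtain ⟨rfl, hR1⟩ := hR
        refine .inr (.inl ⟨C₂, hR1, fun X => .inr ?_⟩)
        have := hW' X
        simpa [Ctx.fill] using this
      | semiL C₁ y => simp [Ctx.fill] at hR
      | semiR y C₂ => simp [Ctx.fill] at hR
    · exact .inr (.inr fun X => .inr (hW' X))

/-- Tracking a formula-leaf position across the essence relation. -/
theorem essence_subst {a b : Bunch} (h : Essence a b) {A : BI} (hA : A ≠ .mtop) :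
    ∀ (C : Ctx), b = C.fill (.fm A) →
      (∃ C' : Ctx, a = C'.fill (.fm A) ∧ ∀ X, Essence (C'.fill X) (C.fill X)) ∨
      (∀ X, Essence a (C.fill X)) := by
  induction h with
  | ofEq hBE =>
    intro C h
    obtain ⟨C', ha, hb⟩ := (bunchEq_subst hBE).1 C A h
    exact .inl ⟨C', ha, fun X => .ofEq (hb X)⟩
  | insert C₀ Γ' Δ h ih =>
    intro C hC
    rcases fill_split C₀ (.comma Γ' (mte Δ)) C A hC with ⟨D, rfl, hD⟩ | ⟨g, e, hg, he, hge⟩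
    · cases D with
      | hole => simp [Ctx.fill] at hD
      | semiL D₁ y => simp [Ctx.fill] at hD
      | semiR y D₁ => simp [Ctx.fill] at hD
      | commaL D₁ y =>
        simp only [Ctx.fill, Bunch.comma.injEq] at hD
        obtain ⟨hD1, rfl⟩ := hD
        rcases ih (C₀.comp D₁) (by rw [Ctx.fill_comp, ← hD1]) with ⟨C', ha, hE⟩ | hE
        · refine .inl ⟨C', ha, fun X => ?_⟩
          have := hE X
          rw [Ctx.fill_comp] at this
          rw [Ctx.fill_comp]
          exact Essence.insert C₀ (D₁.fill X) Δ this
        · refine .inr fun X => ?_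
          have := hE X
          rw [Ctx.fill_comp] at this
          rw [Ctx.fill_comp]
          exact Essence.insert C₀ (D₁.fill X) Δ this
      | commaR y D₁ =>
        simp only [Ctx.fill, Bunch.comma.injEq] at hD
        obtain ⟨rfl, hD1⟩ := hD
        cases Δ with
        | none =>
          cases D₁ with
          | hole => simp [mte, Ctx.fill] at hD1; exact absurd hD1.symm hA
          | semiL D₂ z => simp [mte, Ctx.fill] at hD1
          | semiR z D₂ => simp [mte, Ctx.fill] at hD1
          | commaL D₂ z => simp [mte, Ctx.fill] at hD1
          | commaR z D₂ => simp [mte, Ctx.fill] at hD1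
        | some Δ₀ =>
          cases D₁ with
          | hole => simp [mte, Ctx.fill] at hD1
          | semiL D₂ z =>
            simp only [mte, Ctx.fill, Bunch.semi.injEq] at hD1
            obtain ⟨hD2, rfl⟩ := hD1
            cases D₂ with
            | hole => simp [Ctx.fill] at hD2; exact absurd hD2.symm hA
            | semiL D₃ w => simp [Ctx.fill] at hD2
            | semiR w D₃ => simp [Ctx.fill] at hD2
            | commaL D₃ w => simp [Ctx.fill] at hD2
            | commaR w D₃ => simp [Ctx.fill] at hD2
          | semiR z D₂ =>
            simp only [mte, Ctx.fill, Bunch.semi.injEq] at hD1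
            obtain ⟨rfl, hD2⟩ := hD1
            refine .inr fun X => ?_
            rw [Ctx.fill_comp]
            exact Essence.insert C₀ Γ' (some (D₂.fill X)) h
          | commaL D₂ z => simp [mte, Ctx.fill] at hD1
          | commaR z D₂ => simp [mte, Ctx.fill] at hD1
    · rcases ih (e Γ') (by rw [← hge, hg]) with ⟨C', ha, hE⟩ | hE
      · refine .inl ⟨C', ha, fun X => ?_⟩
        have := hE X
        rw [← hge] at this
        rw [← he, ← hge]
        exact Essence.insert (g X) Γ' Δ this
      · refine .inr fun X => ?_
        have := hE X
        rw [← hge] at this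
        rw [← he, ← hge]
        exact Essence.insert (g X) Γ' Δ this
  | insertSemi C₀ Γ' Γ'' Δ h ih =>
    intro C hC
    rcases fill_split C₀ (.semi (.comma Γ' (mte Δ)) Γ'') C A hC with
      ⟨D, rfl, hD⟩ | ⟨g, e, hg, he, hge⟩
    · cases D with
      | hole => simp [Ctx.fill] at hD
      | semiL D₁ y =>
        simp only [Ctx.fill, Bunch.semi.injEq] at hD
        obtain ⟨hD1, rfl⟩ := hD
        cases D₁ with
        | hole => simp [Ctx.fill] at hD1
        | semiL D₂ z => simp [Ctx.fill] at hD1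
        | semiR z D₂ => simp [Ctx.fill] at hD1
        | commaL D₂ z =>
          simp only [Ctx.fill, Bunch.comma.injEq] at hD1
          obtain ⟨hD2, rfl⟩ := hD1
          rcases ih (C₀.comp (.semiL D₂ Γ''))
              (by rw [Ctx.fill_comp]; simp [Ctx.fill, ← hD2]) with ⟨C', ha, hE⟩ | hE
          · refine .inl ⟨C', ha, fun X => ?_⟩
            have := hE X
            rw [Ctx.fill_comp] at this
            rw [Ctx.fill_comp]
            simp only [Ctx.fill] at this ⊢
            exact Essence.insertSemi C₀ (D₂.fill X) Γ'' Δ this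
          · refine .inr fun X => ?_
            have := hE X
            rw [Ctx.fill_comp] at this
            rw [Ctx.fill_comp]
            simp only [Ctx.fill] at this ⊢
            exact Essence.insertSemi C₀ (D₂.fill X) Γ'' Δ this
        | commaR z D₂ =>
          simp only [Ctx.fill, Bunch.comma.injEq] at hD1
          obtain ⟨rfl, hD2⟩ := hD1
          cases Δ with
          | none =>
            cases D₂ with
            | hole => simp [mte, Ctx.fill] at hD2; exact absurd hD2.symm hA
            | semiL D₃ w => simp [mte, Ctx.fill] at hD2
            | semiR w D₃ => simp [mte, Ctx.fill] at hD2
            | commaL D₃ w => simp [mte, Ctx.fill] at hD2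
            | commaR w D₃ => simp [mte, Ctx.fill] at hD2
          | some Δ₀ =>
            cases D₂ with
            | hole => simp [mte, Ctx.fill] at hD2
            | semiL D₃ w =>
              simp only [mte, Ctx.fill, Bunch.semi.injEq] at hD2
              obtain ⟨hD3, rfl⟩ := hD2
              cases D₃ with
              | hole => simp [Ctx.fill] at hD3; exact absurd hD3.symm hA
              | semiL D₄ v => simp [Ctx.fill] at hD3
              | semiR v D₄ => simp [Ctx.fill] at hD3
              | commaL D₄ v => simp [Ctx.fill] at hD3
              | commaR v D₄ => simp [Ctx.fill] at hD3
            | semiR w D₃ =>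
              simp only [mte, Ctx.fill, Bunch.semi.injEq] at hD2
              obtain ⟨rfl, hD3⟩ := hD2
              refine .inr fun X => ?_
              rw [Ctx.fill_comp]
              simp only [Ctx.fill]
              exact Essence.insertSemi C₀ Γ' Γ'' (some (D₃.fill X)) h
            | commaL D₃ w => simp [mte, Ctx.fill] at hD2
            | commaR w D₃ => simp [mte, Ctx.fill] at hD2
      | semiR y D₁ =>
        simp only [Ctx.fill, Bunch.semi.injEq] at hD
        obtain ⟨rfl, hD1⟩ := hD
        rcases ih (C₀.comp (.semiR Γ' D₁))
            (by rw [Ctx.fill_comp]; simp [Ctx.fill, ← hD1]) with ⟨C', ha, hE⟩ | hE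
        · refine .inl ⟨C', ha, fun X => ?_⟩
          have := hE X
          rw [Ctx.fill_comp] at this
          rw [Ctx.fill_comp]
          simp only [Ctx.fill] at this ⊢
          exact Essence.insertSemi C₀ Γ' (D₁.fill X) Δ this
        · refine .inr fun X => ?_
          have := hE X
          rw [Ctx.fill_comp] at this
          rw [Ctx.fill_comp]
          simp only [Ctx.fill] at this ⊢
          exact Essence.insertSemi C₀ Γ' (D₁.fill X) Δ this
      | commaL D₁ y => simp [Ctx.fill] at hD
      | commaR y D₁ => simp [Ctx.fill] at hD
    · rcases ih (e (.semi Γ' Γ'')) (by rw [← hge, hg]) with ⟨C', ha, hE⟩ | hE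
      · refine .inl ⟨C', ha, fun X => ?_⟩
        have := hE X
        rw [← hge] at this
        rw [← he, ← hge]
        exact Essence.insertSemi (g X) Γ' Γ'' Δ this
      · refine .inr fun X => ?_
        have := hE X
        rw [← hge] at this
        rw [← he, ← hge]
        exact Essence.insertSemi (g X) Γ' Γ'' Δ this
  | congr h hBE ih =>
    intro C hC
    obtain ⟨C'', hb, hBE'⟩ := (bunchEq_subst hBE).1 C A hC
    rcases ih C'' hb with ⟨C', ha, hE⟩ | hE
    · exact .inl ⟨C', ha, fun X => .congr (hE X) (hBE' X)⟩
    · exact .inr fun X => .congr (hE X) (hBE' X)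
/-- Decomposing a leaf position in `osemi Γt (.fm G)` that is not the `G` leaf. -/
theorem osemi_decomp {Γt : Option Bunch} {G A : BI} {C' : Ctx}
    (h : osemi Γt (.fm G) = C'.fill (.fm A)) (hne : A ≠ G) :
    ∃ (Γ₀ : Bunch) (C₂ : Ctx), Γt = some Γ₀ ∧ Γ₀ = C₂.fill (.fm A) ∧
      ∀ X, C'.fill X = .semi (C₂.fill X) (.fm G) := by
  cases Γt with
  | none =>
    simp only [osemi] at h
    cases C' with
    | hole => simp only [Ctx.fill, Bunch.fm.injEq] at h; exact absurd h.symm hne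
    | semiL C₂ y => simp [Ctx.fill] at h
    | semiR y C₂ => simp [Ctx.fill] at h
    | commaL C₂ y => simp [Ctx.fill] at h
    | commaR y C₂ => simp [Ctx.fill] at h
  | some Γ₀ =>
    simp only [osemi] at h
    cases C' with
    | hole => simp [Ctx.fill] at h
    | semiL C₂ y =>
      simp only [Ctx.fill, Bunch.semi.injEq] at h
      obtain ⟨h1, rfl⟩ := h
      exact ⟨Γ₀, C₂, rfl, h1, fun X => by simp [Ctx.fill]⟩
    | semiR y C₂ =>
      simp only [Ctx.fill, Bunch.semi.injEq] at h
      obtain ⟨rfl, h1⟩ := h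
      cases C₂ with
      | hole => simp only [Ctx.fill, Bunch.fm.injEq] at h1; exact absurd h1.symm hne
      | semiL C₃ z => simp [Ctx.fill] at h1
      | semiR z C₃ => simp [Ctx.fill] at h1
      | commaL C₃ z => simp [Ctx.fill] at h1
      | commaR z C₃ => simp [Ctx.fill] at h1
    | commaL C₂ y => simp [Ctx.fill] at h
    | commaR y C₂ => simp [Ctx.fill] at h
/-- Main substitution lemma: replacing a disjunction leaf by either disjunct,
depth-preservingly. -/
theorem lbiz_disj_subst :
    ∀ (k : Nat) {Γ : Bunch} {H : BI} {n : Nat}, LBIZ Candidate false Γ H n → n ≤ k →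
      ∀ (C : Ctx) (F₁ F₂ F : BI), Γ = C.fill (.fm (.disj F₁ F₂)) → (F = F₁ ∨ F = F₂) →
      ∃ l ≤ n, LBIZ Candidate false (C.fill (.fm F)) H l := by
  intro k
  induction k using Nat.strong_induction_on with
  | _ k IHk =>
  intro Γ H n h
  induction h with
  | id Γt p hE =>
    intro _ C F₁ F₂ F hΓ hF
    rcases essence_subst hE (by nofun) C hΓ with ⟨C', ha, hEs⟩ | hEs
    · obtain ⟨Γ₀, C₂, rfl, hΓ₀, hfill⟩ := osemi_decomp ha (by nofun)
      have hE' := hEs (.fm F)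
      rw [hfill (.fm F)] at hE'
      exact ⟨1, Nat.le_refl 1, LBIZ.id (some (C₂.fill (.fm F))) p hE'⟩
    · exact ⟨1, Nat.le_refl 1, LBIZ.id Γt p (hEs (.fm F))⟩
  | botL C₀ H' =>
    intro _ C F₁ F₂ F hΓ hF
    rcases fill_split C₀ (.fm .bot) C _ hΓ with ⟨D, rfl, hD⟩ | ⟨g, e, hg, he, hge⟩
    · cases D <;> simp [Ctx.fill] at hD
    · refine ⟨1, Nat.le_refl 1, ?_⟩
      have := LBIZ.botL (Cand := Candidate) (cut := false) (g (.fm F)) H'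
      rwa [hge, he] at this
  | topR Γ₀ =>
    intro _ C F₁ F₂ F hΓ hF
    exact ⟨1, Nat.le_refl 1, LBIZ.topR _⟩
  | mtopR Γt hE =>
    intro _ C F₁ F₂ F hΓ hF
    rcases essence_subst hE (by nofun) C hΓ with ⟨C', ha, hEs⟩ | hEs
    · obtain ⟨Γ₀, C₂, rfl, hΓ₀, hfill⟩ := osemi_decomp ha (by nofun)
      have hE' := hEs (.fm F)
      rw [hfill (.fm F)] at hE'
      exact ⟨1, Nat.le_refl 1, LBIZ.mtopR (some (C₂.fill (.fm F))) hE'⟩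
    · exact ⟨1, Nat.le_refl 1, LBIZ.mtopR Γt (hEs (.fm F))⟩
  | conjL h ih =>
    rename_i C₀ Fa Ga H' n'
    intro hk C F₁ F₂ F hΓ hF
    rcases fill_split C₀ (.fm (.conj Fa Ga)) C _ hΓ with ⟨D, rfl, hD⟩ | ⟨g, e, hg, he, hge⟩
    · cases D <;> simp [Ctx.fill] at hD
    · obtain ⟨l, hl, d⟩ := ih (by omega) (e (.semi (.fm Fa) (.fm Ga))) F₁ F₂ F
        (by rw [← hge, hg]) hF
      rw [← hge] at d
      refine ⟨l + 1, by omega, ?_⟩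
      have := LBIZ.conjL (C := g (.fm F)) d
      rwa [hge, he] at this
  | conjR h₁ h₂ ih₁ ih₂ =>
    intro hk C F₁ F₂ F hΓ hF
    obtain ⟨l₁, hl₁, d₁⟩ := ih₁ (by omega) C F₁ F₂ F hΓ hF
    obtain ⟨l₂, hl₂, d₂⟩ := ih₂ (by omega) C F₁ F₂ F hΓ hF
    exact ⟨max l₁ l₂ + 1, by omega, LBIZ.conjR d₁ d₂⟩
  | disjL h₁ h₂ ih₁ ih₂ =>
    rename_i C₀ Fa Ga H' n' m'
    intro hk C F₁ F₂ F hΓ hF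
    rcases fill_split C₀ (.fm (.disj Fa Ga)) C _ hΓ with ⟨D, rfl, hD⟩ | ⟨g, e, hg, he, hge⟩
    · cases D with
      | hole =>
        simp only [Ctx.fill, Bunch.fm.injEq, BI.disj.injEq] at hD
        obtain ⟨rfl, rfl⟩ := hD
        rcases hF with rfl | rfl
        · exact ⟨n', by omega, by rw [Ctx.fill_comp]; exact h₁⟩
        · exact ⟨m', by omega, by rw [Ctx.fill_comp]; exact h₂⟩
      | semiL D₁ y => simp [Ctx.fill] at hD
      | semiR y D₁ => simp [Ctx.fill] at hD
      | commaL D₁ y => simp [Ctx.fill] at hD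
      | commaR y D₁ => simp [Ctx.fill] at hD
    · obtain ⟨l₁, hl₁, d₁⟩ := ih₁ (by omega) (e (.fm Fa)) F₁ F₂ F (by rw [← hge, hg]) hF
      obtain ⟨l₂, hl₂, d₂⟩ := ih₂ (by omega) (e (.fm Ga)) F₁ F₂ F (by rw [← hge, hg]) hF
      rw [← hge] at d₁ d₂
      refine ⟨max l₁ l₂ + 1, by omega, ?_⟩
      have := LBIZ.disjL (C := g (.fm F)) d₁ d₂
      rwa [hge, he] at this
  | disjR₁ h ih =>
    intro hk C F₁ F₂ F hΓ hF
    obtain ⟨l, hl, d⟩ := ih (by omega) C F₁ F₂ F hΓ hF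
    exact ⟨l + 1, by omega, LBIZ.disjR₁ d⟩
  | disjR₂ h ih =>
    intro hk C F₁ F₂ F hΓ hF
    obtain ⟨l, hl, d⟩ := ih (by omega) C F₁ F₂ F hΓ hF
    exact ⟨l + 1, by omega, LBIZ.disjR₂ d⟩
  | impR h ih =>
    rename_i Γ₀ Fa Ga n'
    intro hk C F₁ F₂ F hΓ hF
    obtain ⟨l, hl, d⟩ := ih (by omega) (.semiL C (.fm Fa)) F₁ F₂ F
      (by simp [Ctx.fill, hΓ]) hF
    exact ⟨l + 1, by omega, LBIZ.impR (by simpa [Ctx.fill] using d)⟩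
  | wandR h ih =>
    rename_i Γ₀ Fa Ga n'
    intro hk C F₁ F₂ F hΓ hF
    obtain ⟨l, hl, d⟩ := ih (by omega) (.commaL C (.fm Fa)) F₁ F₂ F
      (by simp [Ctx.fill, hΓ]) hF
    exact ⟨l + 1, by omega, LBIZ.wandR (by simpa [Ctx.fill] using d)⟩
  | starL h ih =>
    rename_i C₀ Fa Ga H' n'
    intro hk C F₁ F₂ F hΓ hF
    rcases fill_split C₀ (.fm (.star Fa Ga)) C _ hΓ with ⟨D, rfl, hD⟩ | ⟨g, e, hg, he, hge⟩
    · cases D <;> simp [Ctx.fill] at hD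
    · obtain ⟨l, hl, d⟩ := ih (by omega) (e (.comma (.fm Fa) (.fm Ga))) F₁ F₂ F
        (by rw [← hge, hg]) hF
      rw [← hge] at d
      refine ⟨l + 1, by omega, ?_⟩
      have := LBIZ.starL (C := g (.fm F)) d
      rwa [hge, he] at this
  | starR hcand h₁ h₂ ih₁ ih₂ =>
    rename_i Γ' R₁ R₂ Fa Ga n' m'
    intro hk C F₁ F₂ F hΓ hF
    rcases hcand with hc | hc
    · rcases candidate_subst hc C _ hΓ with ⟨C₁, hR, hc'⟩ | ⟨C₂, hR, hc'⟩ | hc'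
      · obtain ⟨l, hl, d⟩ := ih₁ (by omega) C₁ F₁ F₂ F hR hF
        exact ⟨max l m' + 1, by omega, LBIZ.starR (Or.inl (hc' (.fm F))) d h₂⟩
      · obtain ⟨l, hl, d⟩ := ih₂ (by omega) C₂ F₁ F₂ F hR hF
        exact ⟨max n' l + 1, by omega, LBIZ.starR (Or.inl (hc' (.fm F))) h₁ d⟩
      · exact ⟨max n' m' + 1, by omega, LBIZ.starR (Or.inl (hc' (.fm F))) h₁ h₂⟩
    · rcases candidate_subst hc C _ hΓ with ⟨C₂, hR, hc'⟩ | ⟨C₁, hR, hc'⟩ | hc'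
      · obtain ⟨l, hl, d⟩ := ih₂ (by omega) C₂ F₁ F₂ F hR hF
        exact ⟨max n' l + 1, by omega, LBIZ.starR (Or.inr (hc' (.fm F))) h₁ d⟩
      · obtain ⟨l, hl, d⟩ := ih₁ (by omega) C₁ F₁ F₂ F hR hF
        exact ⟨max l m' + 1, by omega, LBIZ.starR (Or.inr (hc' (.fm F))) d h₂⟩
      · exact ⟨max n' m' + 1, by omega, LBIZ.starR (Or.inr (hc' (.fm F))) h₁ h₂⟩
  | impL Γt hE h₁ h₂ ih₁ ih₂ =>
    rename_i Fa Ga Δ C₀ H' n' m'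
    intro hk C F₁ F₂ F hΓ hF
    rcases fill_split C₀ Δ C _ hΓ with ⟨D, rfl, hD⟩ | ⟨g, e, hg, he, hge⟩
    · obtain ⟨l₁, hl₁, d₁⟩ := ih₁ (by omega) D F₁ F₂ F hD hF
      obtain ⟨l₂, hl₂, d₂⟩ := ih₂ (by omega) (C₀.comp (.semiR (.fm Ga) D)) F₁ F₂ F
        (by rw [Ctx.fill_comp]; simp [Ctx.fill, ← hD]) hF
      rw [Ctx.fill_comp] at d₂
      simp only [Ctx.fill] at d₂
      rcases essence_subst hE (by nofun) D hD with ⟨C', ha, hEs⟩ | hEs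
      · obtain ⟨Γ₀, C₂, rfl, hΓ₀, hfill⟩ := osemi_decomp ha (by nofun)
        have hE' := hEs (.fm F)
        rw [hfill (.fm F)] at hE'
        refine ⟨max l₁ l₂ + 1, by omega, ?_⟩
        rw [Ctx.fill_comp]
        exact LBIZ.impL (some (C₂.fill (.fm F))) hE' d₁ d₂
      · refine ⟨max l₁ l₂ + 1, by omega, ?_⟩
        rw [Ctx.fill_comp]
        exact LBIZ.impL Γt (hEs (.fm F)) d₁ d₂
    · obtain ⟨l₂, hl₂, d₂⟩ := ih₂ (by omega) (e (.semi (.fm Ga) Δ)) F₁ F₂ F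
        (by rw [← hge, hg]) hF
      rw [← hge] at d₂
      refine ⟨max n' l₂ + 1, by omega, ?_⟩
      have := LBIZ.impL (C := g (.fm F)) Γt hE h₁ d₂
      rwa [hge, he] at this
  | wandL Γ'o Rej Rei Γt hE hside h₁ h₂ ih₁ ih₂ =>
    rename_i Fa Ga Δ C₀ H' n' m'
    intro hk C F₁ F₂ F hΓ hF
    rcases fill_split C₀ (ocomma Γ'o Δ) C _ hΓ with ⟨D, rfl, hD⟩ | ⟨g, e, hg, he, hge⟩
    · cases Γ'o with
      | none =>
        simp only [ocomma] at hD
        rcases hside with ⟨-, hRei, hRej⟩ | ⟨Γ'', Rj, hcon, -⟩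
        · subst hRei; subst hRej
          obtain ⟨l₂, hl₂, d₂⟩ := ih₂ (by omega)
            (C₀.comp (.semiR (.fm Ga) D)) F₁ F₂ F
            (by rw [Ctx.fill_comp]; simp [ocomma, Ctx.fill, ← hD]) hF
          rw [Ctx.fill_comp] at d₂
          simp only [Ctx.fill] at d₂
          rcases essence_subst hE (by nofun) D hD with ⟨C', ha, hEs⟩ | hEs
          · obtain ⟨Γ₀, C₂, rfl, hΓ₀, hfill⟩ := osemi_decomp ha (by nofun)
            have hE' := hEs (.fm F)
            rw [hfill (.fm F)] at hE'
            refine ⟨max n' l₂ + 1, by omega, ?_⟩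
            rw [Ctx.fill_comp]
            exact LBIZ.wandL none none (.fm .mtop) (some (C₂.fill (.fm F))) hE'
              (Or.inl ⟨rfl, rfl, rfl⟩) h₁ d₂
          · refine ⟨max n' l₂ + 1, by omega, ?_⟩
            rw [Ctx.fill_comp]
            exact LBIZ.wandL none none (.fm .mtop) Γt (hEs (.fm F))
              (Or.inl ⟨rfl, rfl, rfl⟩) h₁ d₂
        · exact nomatch hcon
      | some Γ' =>
        simp only [ocomma] at hD
        cases D with
        | hole => simp [Ctx.fill] at hD
        | semiL D₁ y => simp [Ctx.fill] at hD
        | semiR y D₁ => simp [Ctx.fill] at hD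
        | commaR y D₁ =>
          simp only [Ctx.fill, Bunch.comma.injEq] at hD
          obtain ⟨rfl, hD1⟩ := hD
          rcases hside with ⟨hcon, -, -⟩ | ⟨Γ'', Rj, hΓ'', hRej, hcands⟩
          · exact nomatch hcon
          injection hΓ'' with hΓ''
          subst hΓ''
          subst hRej
          obtain ⟨l₂, hl₂, d₂⟩ := ih₂ (by omega)
            (C₀.comp (.semiR (.comma Rj (.fm Ga)) (.commaR Γ' D₁))) F₁ F₂ F
            (by rw [Ctx.fill_comp]; simp [ocomma, Ctx.fill, ← hD1]) hF
          rw [Ctx.fill_comp] at d₂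
          simp only [Ctx.fill] at d₂
          rcases essence_subst hE (by nofun) D₁ hD1 with ⟨C', ha, hEs⟩ | hEs
          · obtain ⟨Γ₀, C₂, rfl, hΓ₀, hfill⟩ := osemi_decomp ha (by nofun)
            have hE' := hEs (.fm F)
            rw [hfill (.fm F)] at hE'
            refine ⟨max n' l₂ + 1, by omega, ?_⟩
            rw [Ctx.fill_comp]
            exact LBIZ.wandL (some Γ') (some Rj) Rei (some (C₂.fill (.fm F))) hE'
              (Or.inr ⟨Γ', Rj, rfl, rfl, hcands⟩) h₁ d₂
          · refine ⟨max n' l₂ + 1, by omega, ?_⟩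
            rw [Ctx.fill_comp]
            exact LBIZ.wandL (some Γ') (some Rj) Rei Γt (hEs (.fm F))
              (Or.inr ⟨Γ', Rj, rfl, rfl, hcands⟩) h₁ d₂
        | commaL D₁ y =>
          simp only [Ctx.fill, Bunch.comma.injEq] at hD
          obtain ⟨hD1, rfl⟩ := hD
          rcases hside with ⟨hcon, -, -⟩ | ⟨Γ'', Rj, hΓ'', hRej, hcands⟩
          · exact nomatch hcon
          injection hΓ'' with hΓ''
          subst hΓ''
          subst hRej
          obtain ⟨l₂, hl₂, d₂⟩ := ih₂ (by omega)
            (C₀.comp (.semiR (.comma Rj (.fm Ga)) (.commaL D₁ Δ))) F₁ F₂ F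
            (by rw [Ctx.fill_comp]; simp [ocomma, Ctx.fill, ← hD1]) hF
          rw [Ctx.fill_comp] at d₂
          simp only [Ctx.fill] at d₂
          rcases hcands with hc | hc
          · rcases candidate_subst hc D₁ _ hD1 with ⟨C₁, hRei, hc'⟩ | ⟨C₂, hRj, hc'⟩ | hc'
            · obtain ⟨l₁, hl₁, d₁⟩ := ih₁ (by omega) C₁ F₁ F₂ F hRei hF
              refine ⟨max l₁ l₂ + 1, by omega, ?_⟩
              rw [Ctx.fill_comp]
              exact LBIZ.wandL (some (D₁.fill (.fm F))) (some Rj) (C₁.fill (.fm F)) Γt hE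
                (Or.inr ⟨_, _, rfl, rfl, Or.inl (hc' (.fm F))⟩) d₁ d₂
            · obtain ⟨l₃, hl₃, d₃⟩ := IHk l₂ (by omega) d₂ (Nat.le_refl l₂)
                (C₀.comp (.semiL (.commaL C₂ (.fm Ga)) (.comma (D₁.fill (.fm F)) Δ)))
                F₁ F₂ F (by rw [Ctx.fill_comp]; simp [Ctx.fill, ← hRj]) hF
              rw [Ctx.fill_comp] at d₃
              simp only [Ctx.fill] at d₃
              refine ⟨max n' l₃ + 1, by omega, ?_⟩
              rw [Ctx.fill_comp]
              exact LBIZ.wandL (some (D₁.fill (.fm F))) (some (C₂.fill (.fm F))) Rei Γt hE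
                (Or.inr ⟨_, _, rfl, rfl, Or.inl (hc' (.fm F))⟩) h₁ d₃
            · refine ⟨max n' l₂ + 1, by omega, ?_⟩
              rw [Ctx.fill_comp]
              exact LBIZ.wandL (some (D₁.fill (.fm F))) (some Rj) Rei Γt hE
                (Or.inr ⟨_, _, rfl, rfl, Or.inl (hc' (.fm F))⟩) h₁ d₂
          · rcases candidate_subst hc D₁ _ hD1 with ⟨C₂, hRj, hc'⟩ | ⟨C₁, hRei, hc'⟩ | hc'
            · obtain ⟨l₃, hl₃, d₃⟩ := IHk l₂ (by omega) d₂ (Nat.le_refl l₂)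
                (C₀.comp (.semiL (.commaL C₂ (.fm Ga)) (.comma (D₁.fill (.fm F)) Δ)))
                F₁ F₂ F (by rw [Ctx.fill_comp]; simp [Ctx.fill, ← hRj]) hF
              rw [Ctx.fill_comp] at d₃
              simp only [Ctx.fill] at d₃
              refine ⟨max n' l₃ + 1, by omega, ?_⟩
              rw [Ctx.fill_comp]
              exact LBIZ.wandL (some (D₁.fill (.fm F))) (some (C₂.fill (.fm F))) Rei Γt hE
                (Or.inr ⟨_, _, rfl, rfl, Or.inr (hc' (.fm F))⟩) h₁ d₃
            · obtain ⟨l₁, hl₁, d₁⟩ := ih₁ (by omega) C₁ F₁ F₂ F hRei hF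
              refine ⟨max l₁ l₂ + 1, by omega, ?_⟩
              rw [Ctx.fill_comp]
              exact LBIZ.wandL (some (D₁.fill (.fm F))) (some Rj) (C₁.fill (.fm F)) Γt hE
                (Or.inr ⟨_, _, rfl, rfl, Or.inr (hc' (.fm F))⟩) d₁ d₂
            · refine ⟨max n' l₂ + 1, by omega, ?_⟩
              rw [Ctx.fill_comp]
              exact LBIZ.wandL (some (D₁.fill (.fm F))) (some Rj) Rei Γt hE
                (Or.inr ⟨_, _, rfl, rfl, Or.inr (hc' (.fm F))⟩) h₁ d₂
    · obtain ⟨l₂, hl₂, d₂⟩ := ih₂ (by omega)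
        (e (.semi (ocomma Rej (.fm Ga)) (ocomma Γ'o Δ))) F₁ F₂ F (by rw [← hge, hg]) hF
      rw [← hge] at d₂
      refine ⟨max n' l₂ + 1, by omega, ?_⟩
      have := LBIZ.wandL (C := g (.fm F)) Γ'o Rej Rei Γt hE hside h₁ d₂
      rwa [hge, he] at this
  | equiv hBE h ih =>
    intro hk C F₁ F₂ F hΓ hF
    obtain ⟨C'', hb, hBE'⟩ := (bunchEq_subst hBE).1 C _ hΓ
    obtain ⟨l, hl, d⟩ := ih hk C'' F₁ F₂ F hb hF
    exact ⟨l, hl, LBIZ.equiv (hBE' (.fm F)) d⟩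
  | cutRule hcut _ _ _ _ =>
    intro _ _ _ _ _ _ _
    exact absurd hcut (by simp)

/-- ∨L is depth-preserving invertible in LBIZ. -/
theorem lbiz_disjL_invertible (C : Ctx) (F₁ F₂ H : BI) (k : Nat)
    (h : LBIZc (C.fill (.fm (.disj F₁ F₂))) H k) :
    (∃ l ≤ k, LBIZc (C.fill (.fm F₁)) H l) ∧
    (∃ l ≤ k, LBIZc (C.fill (.fm F₂)) H l) := by
  exact ⟨lbiz_disj_subst k h (Nat.le_refl k) C F₁ F₂ F₁ rfl (Or.inl rfl),
    lbiz_disj_subst k h (Nat.le_refl k) C F₁ F₂ F₂ rfl (Or.inr rfl)⟩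
end

section
/- The left multiplicative conjunction rule is depth-preserving invertible in LBIZ: if Γ(F * G) ⊢ H is derivable in LBIZ with derivation depth at most k, then Γ(F, G) ⊢ H is derivable in LBIZ with derivation depth at most k. -/
/-- RpBlacement relation: replace some leaves `fm (star A B)` by `(fm A, fm B)`. -/
inductive RpB : Bunch → Bunch → Prop
  | fm (A : BI) : RpB (.fm A) (.fm A)
  | star (A B : BI) : RpB (.fm (.star A B)) (.comma (.fm A) (.fm B))
  | semi {a a' b b'} : RpB a a' → RpB b b' → RpB (.semi a b) (.semi a' b')
  | comma {a a' b b'} : RpB a a' → RpB b b' → RpB (.comma a b) (.comma a' b')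

lemma RpB.refl : ∀ a, RpB a a
  | .fm A => .fm A
  | .semi a b => .semi (RpB.refl a) (RpB.refl b)
  | .comma a b => .comma (RpB.refl a) (RpB.refl b)

lemma rep_semi_inv {a b y} (h : RpB (.semi a b) y) :
    ∃ a' b', y = .semi a' b' ∧ RpB a a' ∧ RpB b b' := by
  cases h; exact ⟨_, _, rfl, ‹_›, ‹_›⟩

lemma rep_comma_inv {a b y} (h : RpB (.comma a b) y) :
    ∃ a' b', y = .comma a' b' ∧ RpB a a' ∧ RpB b b' := by
  cases h; exact ⟨_, _, rfl, ‹_›, ‹_›⟩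

lemma rep_fm_inv {A y} (h : RpB (.fm A) y) :
    y = .fm A ∨ ∃ B C, A = .star B C ∧ y = .comma (.fm B) (.fm C) := by
  cases h
  · exact Or.inl rfl
  · exact Or.inr ⟨_, _, rfl, rfl⟩

/-- Contexts related pointwise by `RpB` on the side bunches. -/
inductive RpCtx : Ctx → Ctx → Prop
  | hole : RpCtx .hole .hole
  | semiL {C C' Γ Γ'} : RpCtx C C' → RpB Γ Γ' → RpCtx (.semiL C Γ) (.semiL C' Γ')
  | semiR {Γ Γ' C C'} : RpB Γ Γ' → RpCtx C C' → RpCtx (.semiR Γ C) (.semiR Γ' C')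
  | commaL {C C' Γ Γ'} : RpCtx C C' → RpB Γ Γ' → RpCtx (.commaL C Γ) (.commaL C' Γ')
  | commaR {Γ Γ' C C'} : RpB Γ Γ' → RpCtx C C' → RpCtx (.commaR Γ C) (.commaR Γ' C')

lemma RpCtx.refl : ∀ C, RpCtx C C
  | .hole => .hole
  | .semiL C Γ => .semiL (RpCtx.refl C) (RpB.refl Γ)
  | .semiR Γ C => .semiR (RpB.refl Γ) (RpCtx.refl C)
  | .commaL C Γ => .commaL (RpCtx.refl C) (RpB.refl Γ)
  | .commaR Γ C => .commaR (RpB.refl Γ) (RpCtx.refl C)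

lemma rep_fill {C C'} (h : RpCtx C C') : ∀ {X X'}, RpB X X' → RpB (C.fill X) (C'.fill X') := by
  induction h with
  | hole => intro X X' hX; exact hX
  | semiL _ hΓ ih => intro X X' hX; exact .semi (ih hX) hΓ
  | semiR hΓ _ ih => intro X X' hX; exact .semi hΓ (ih hX)
  | commaL _ hΓ ih => intro X X' hX; exact .comma (ih hX) hΓ
  | commaR hΓ _ ih => intro X X' hX; exact .comma hΓ (ih hX)

lemma rep_fill_inv : ∀ (C : Ctx) {X y}, RpB (C.fill X) y →
    ∃ C' X', RpCtx C C' ∧ RpB X X' ∧ y = C'.fill X'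
  | .hole, X, y, h => ⟨.hole, y, .hole, h, rfl⟩
  | .semiL C Γ, X, y, h => by
      obtain ⟨u, v, rfl, hu, hv⟩ := rep_semi_inv h
      obtain ⟨C', X', h1, h2, rfl⟩ := rep_fill_inv C hu
      exact ⟨.semiL C' v, X', .semiL h1 hv, h2, rfl⟩
  | .semiR Γ C, X, y, h => by
      obtain ⟨u, v, rfl, hu, hv⟩ := rep_semi_inv h
      obtain ⟨C', X', h1, h2, rfl⟩ := rep_fill_inv C hv
      exact ⟨.semiR u C', X', .semiR hu h1, h2, rfl⟩
  | .commaL C Γ, X, y, h => by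
      obtain ⟨u, v, rfl, hu, hv⟩ := rep_comma_inv h
      obtain ⟨C', X', h1, h2, rfl⟩ := rep_fill_inv C hu
      exact ⟨.commaL C' v, X', .commaL h1 hv, h2, rfl⟩
  | .commaR Γ C, X, y, h => by
      obtain ⟨u, v, rfl, hu, hv⟩ := rep_comma_inv h
      obtain ⟨C', X', h1, h2, rfl⟩ := rep_fill_inv C hv
      exact ⟨.commaR u C', X', .commaR hu h1, h2, rfl⟩

lemma rep_bunchEq {a b} (h : BunchEq a b) :
    (∀ a', RpB a a' → ∃ b', RpB b b' ∧ BunchEq a' b') ∧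
    (∀ b', RpB b b' → ∃ a', RpB a a' ∧ BunchEq a' b') := by
  induction h with
  | refl Γ => exact ⟨fun a' h => ⟨a', h, .refl _⟩, fun a' h => ⟨a', h, .refl _⟩⟩
  | symm h ih =>
      refine ⟨fun x hx => ?_, fun x hx => ?_⟩
      · obtain ⟨y, h1, h2⟩ := ih.2 x hx; exact ⟨y, h1, h2.symm⟩
      · obtain ⟨y, h1, h2⟩ := ih.1 x hx; exact ⟨y, h1, h2.symm⟩
  | trans h1 h2 ih1 ih2 =>
      refine ⟨fun x hx => ?_, fun x hx => ?_⟩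
      · obtain ⟨y, hy1, hy2⟩ := ih1.1 x hx
        obtain ⟨z, hz1, hz2⟩ := ih2.1 y hy1
        exact ⟨z, hz1, hy2.trans hz2⟩
      · obtain ⟨y, hy1, hy2⟩ := ih2.2 x hx
        obtain ⟨z, hz1, hz2⟩ := ih1.2 y hy1
        exact ⟨z, hz1, hz2.trans hy2⟩
  | semiComm a b =>
      refine ⟨fun x hx => ?_, fun x hx => ?_⟩
      · obtain ⟨u, v, rfl, hu, hv⟩ := rep_semi_inv hx
        exact ⟨.semi v u, .semi hv hu, .semiComm _ _⟩
      · obtain ⟨u, v, rfl, hu, hv⟩ := rep_semi_inv hx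
        exact ⟨.semi v u, .semi hv hu, .semiComm _ _⟩
  | semiAssoc a b c =>
      refine ⟨fun x hx => ?_, fun x hx => ?_⟩
      · obtain ⟨u, w, rfl, hu, hw⟩ := rep_semi_inv hx
        obtain ⟨u1, u2, rfl, h1, h2⟩ := rep_semi_inv hu
        exact ⟨.semi u1 (.semi u2 w), .semi h1 (.semi h2 hw), .semiAssoc _ _ _⟩
      · obtain ⟨u, w, rfl, hu, hw⟩ := rep_semi_inv hx
        obtain ⟨w1, w2, rfl, h1, h2⟩ := rep_semi_inv hw
        exact ⟨.semi (.semi u w1) w2, .semi (.semi hu h1) h2, .semiAssoc _ _ _⟩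
  | commaComm a b =>
      refine ⟨fun x hx => ?_, fun x hx => ?_⟩
      · obtain ⟨u, v, rfl, hu, hv⟩ := rep_comma_inv hx
        exact ⟨.comma v u, .comma hv hu, .commaComm _ _⟩
      · obtain ⟨u, v, rfl, hu, hv⟩ := rep_comma_inv hx
        exact ⟨.comma v u, .comma hv hu, .commaComm _ _⟩
  | commaAssoc a b c =>
      refine ⟨fun x hx => ?_, fun x hx => ?_⟩
      · obtain ⟨u, w, rfl, hu, hw⟩ := rep_comma_inv hx
        obtain ⟨u1, u2, rfl, h1, h2⟩ := rep_comma_inv hu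
        exact ⟨.comma u1 (.comma u2 w), .comma h1 (.comma h2 hw), .commaAssoc _ _ _⟩
      · obtain ⟨u, w, rfl, hu, hw⟩ := rep_comma_inv hx
        obtain ⟨w1, w2, rfl, h1, h2⟩ := rep_comma_inv hw
        exact ⟨.comma (.comma u w1) w2, .comma (.comma hu h1) h2, .commaAssoc _ _ _⟩
  | semiCongr h1 h2 ih1 ih2 =>
      refine ⟨fun x hx => ?_, fun x hx => ?_⟩
      · obtain ⟨u, v, rfl, hu, hv⟩ := rep_semi_inv hx
        obtain ⟨u', hu1, hu2⟩ := ih1.1 u hu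
        obtain ⟨v', hv1, hv2⟩ := ih2.1 v hv
        exact ⟨.semi u' v', .semi hu1 hv1, .semiCongr hu2 hv2⟩
      · obtain ⟨u, v, rfl, hu, hv⟩ := rep_semi_inv hx
        obtain ⟨u', hu1, hu2⟩ := ih1.2 u hu
        obtain ⟨v', hv1, hv2⟩ := ih2.2 v hv
        exact ⟨.semi u' v', .semi hu1 hv1, .semiCongr hu2 hv2⟩
  | commaCongr h1 h2 ih1 ih2 =>
      refine ⟨fun x hx => ?_, fun x hx => ?_⟩
      · obtain ⟨u, v, rfl, hu, hv⟩ := rep_comma_inv hx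
        obtain ⟨u', hu1, hu2⟩ := ih1.1 u hu
        obtain ⟨v', hv1, hv2⟩ := ih2.1 v hv
        exact ⟨.comma u' v', .comma hu1 hv1, .commaCongr hu2 hv2⟩
      · obtain ⟨u, v, rfl, hu, hv⟩ := rep_comma_inv hx
        obtain ⟨u', hu1, hu2⟩ := ih1.2 u hu
        obtain ⟨v', hv1, hv2⟩ := ih2.2 v hv
        exact ⟨.comma u' v', .comma hu1 hv1, .commaCongr hu2 hv2⟩

lemma wle_rep {a b} (h : Wle a b) : ∀ b', RpB b b' → ∃ a', RpB a a' ∧ Wle a' b' := by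
  induction h with
  | ofEq h =>
      intro b' hb
      obtain ⟨a', h1, h2⟩ := (rep_bunchEq h).2 b' hb
      exact ⟨a', h1, .ofEq h2⟩
  | weak C Δ Γ' =>
      intro b' hb
      obtain ⟨C', X', hC, hX, rfl⟩ := rep_fill_inv C hb
      obtain ⟨Δ', Γ'', rfl, h1, h2⟩ := rep_semi_inv hX
      exact ⟨C'.fill Δ', rep_fill hC h1, .weak C' Δ' Γ''⟩
  | trans h1 h2 ih1 ih2 =>
      intro b' hb
      obtain ⟨m, hm1, hm2⟩ := ih2 b' hb
      obtain ⟨a', ha1, ha2⟩ := ih1 m hm1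
      exact ⟨a', ha1, ha2.trans hm2⟩

lemma rep_mte_inv {Δ y} (h : RpB (mte Δ) y) : ∃ Δ', y = mte Δ' := by
  cases Δ with
  | none =>
      simp only [mte] at h
      rcases rep_fm_inv h with rfl | ⟨B, C, hBC, _⟩
      · exact ⟨none, rfl⟩
      · cases hBC
  | some Δ =>
      simp only [mte] at h
      obtain ⟨u, v, rfl, hu, hv⟩ := rep_semi_inv h
      rcases rep_fm_inv hu with rfl | ⟨B, C, hBC, _⟩
      · exact ⟨some v, rfl⟩
      · cases hBC

lemma essence_rep {a b} (h : Essence a b) :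
    ∀ b', RpB b b' → ∃ a', RpB a a' ∧ Essence a' b' := by
  induction h with
  | ofEq h =>
      intro b' hb
      obtain ⟨a', h1, h2⟩ := (rep_bunchEq h).2 b' hb
      exact ⟨a', h1, .ofEq h2⟩
  | insert C Γ' Δ h ih =>
      intro b' hb
      obtain ⟨C', X', hC, hX, rfl⟩ := rep_fill_inv C hb
      obtain ⟨Γ'₂, m, rfl, hΓ, hm⟩ := rep_comma_inv hX
      obtain ⟨Δ₂, rfl⟩ := rep_mte_inv hm
      obtain ⟨a', ha, he⟩ := ih (C'.fill Γ'₂) (rep_fill hC hΓ)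
      exact ⟨a', ha, .insert C' Γ'₂ Δ₂ he⟩
  | insertSemi C Γ' Γ'' Δ h ih =>
      intro b' hb
      obtain ⟨C', X', hC, hX, rfl⟩ := rep_fill_inv C hb
      obtain ⟨u, w, rfl, hu, hw⟩ := rep_semi_inv hX
      obtain ⟨Γ'₂, m, rfl, hΓ, hm⟩ := rep_comma_inv hu
      obtain ⟨Δ₂, rfl⟩ := rep_mte_inv hm
      obtain ⟨a', ha, he⟩ := ih (C'.fill (.semi Γ'₂ w)) (rep_fill hC (.semi hΓ hw))
      exact ⟨a', ha, .insertSemi C' Γ'₂ w Δ₂ he⟩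
  | congr h hbc ih =>
      intro c' hc
      obtain ⟨b', h1, h2⟩ := (rep_bunchEq hbc).2 c' hc
      obtain ⟨a', ha1, ha2⟩ := ih b' h1
      exact ⟨a', ha1, ha2.congr h2⟩

lemma rep_osemi_fm_inv {Γt X y} (h : RpB (osemi Γt (.fm X)) y)
    (hX : ∀ B C, X ≠ BI.star B C) : ∃ Γt', y = osemi Γt' (.fm X) := by
  cases Γt with
  | none =>
      simp only [osemi] at h
      rcases rep_fm_inv h with rfl | ⟨B, C, hBC, _⟩
      · exact ⟨none, rfl⟩
      · exact absurd hBC (hX B C)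
  | some Γt =>
      simp only [osemi] at h
      obtain ⟨u, v, rfl, hu, hv⟩ := rep_semi_inv h
      rcases rep_fm_inv hv with rfl | ⟨B, C, hBC, _⟩
      · exact ⟨some u, rfl⟩
      · exact absurd hBC (hX B C)

lemma candidate_rep {Γ R₁ R₂ Γ'} (h : Candidate Γ R₁ R₂) (hΓ : RpB Γ Γ') :
    ∃ R₁' R₂', RpB R₁ R₁' ∧ RpB R₂ R₂' ∧ Candidate Γ' R₁' R₂' := by
  rcases h with ⟨rfl, hw⟩ | hw
  · obtain ⟨R₁', h1, h2⟩ := wle_rep hw Γ' hΓ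
    exact ⟨R₁', .fm .mtop, h1, RpB.refl _, Or.inl ⟨rfl, h2⟩⟩
  · obtain ⟨x, hx, h2⟩ := wle_rep hw Γ' hΓ
    obtain ⟨R₁', R₂', rfl, hr1, hr2⟩ := rep_comma_inv hx
    exact ⟨R₁', R₂', hr1, hr2, Or.inr h2⟩

lemma lbiz_rep {Γ H n} (h : LBIZ Candidate false Γ H n) :
    ∀ Γ', RpB Γ Γ' → ∃ l ≤ n, LBIZ Candidate false Γ' H l := by
  induction h with
  | id Γt p hE =>
      intro Γ' hΓ
      obtain ⟨a', ha, he⟩ := essence_rep hE Γ' hΓ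
      obtain ⟨Γt', rfl⟩ := rep_osemi_fm_inv ha (by rintro B C ⟨⟩)
      exact ⟨1, le_refl 1, .id Γt' p he⟩
  | botL C H =>
      intro Γ' hΓ
      obtain ⟨C', X', hC, hX, rfl⟩ := rep_fill_inv C hΓ
      rcases rep_fm_inv hX with rfl | ⟨B, C₀, hBC, _⟩
      · exact ⟨1, le_refl 1, .botL C' H⟩
      · cases hBC
  | topR Γ => intro Γ' hΓ; exact ⟨1, le_refl 1, .topR Γ'⟩
  | mtopR Γt hE =>
      intro Γ' hΓ
      obtain ⟨a', ha, he⟩ := essence_rep hE Γ' hΓ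
      obtain ⟨Γt', rfl⟩ := rep_osemi_fm_inv ha (by rintro B C ⟨⟩)
      exact ⟨1, le_refl 1, .mtopR Γt' he⟩
  | conjL h ih =>
      intro Γ' hΓ
      obtain ⟨C', X', hC, hX, rfl⟩ := rep_fill_inv _ hΓ
      rcases rep_fm_inv hX with rfl | ⟨B, C₀, hBC, _⟩
      · obtain ⟨l, hl, d⟩ := ih _ (rep_fill hC (RpB.refl _))
        exact ⟨l + 1, by omega, .conjL d⟩
      · cases hBC
  | conjR h1 h2 ih1 ih2 =>
      intro Γ' hΓ
      obtain ⟨l1, hl1, d1⟩ := ih1 Γ' hΓ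
      obtain ⟨l2, hl2, d2⟩ := ih2 Γ' hΓ
      exact ⟨max l1 l2 + 1, by omega, .conjR d1 d2⟩
  | disjL h1 h2 ih1 ih2 =>
      intro Γ' hΓ
      obtain ⟨C', X', hC, hX, rfl⟩ := rep_fill_inv _ hΓ
      rcases rep_fm_inv hX with rfl | ⟨B, C₀, hBC, _⟩
      · obtain ⟨l1, hl1, d1⟩ := ih1 _ (rep_fill hC (RpB.refl _))
        obtain ⟨l2, hl2, d2⟩ := ih2 _ (rep_fill hC (RpB.refl _))
        exact ⟨max l1 l2 + 1, by omega, .disjL d1 d2⟩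
      · cases hBC
  | disjR₁ h ih =>
      intro Γ' hΓ
      obtain ⟨l, hl, d⟩ := ih Γ' hΓ
      exact ⟨l + 1, by omega, .disjR₁ d⟩
  | disjR₂ h ih =>
      intro Γ' hΓ
      obtain ⟨l, hl, d⟩ := ih Γ' hΓ
      exact ⟨l + 1, by omega, .disjR₂ d⟩
  | impL Γt hE h1 h2 ih1 ih2 =>
      intro Γ' hΓ
      obtain ⟨C', Δ₁, hC, hΔ, rfl⟩ := rep_fill_inv _ hΓ
      obtain ⟨a', ha, he⟩ := essence_rep hE Δ₁ hΔ
      obtain ⟨Γt', rfl⟩ := rep_osemi_fm_inv ha (by rintro B C ⟨⟩)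
      obtain ⟨l1, hl1, d1⟩ := ih1 Δ₁ hΔ
      obtain ⟨l2, hl2, d2⟩ := ih2 _ (rep_fill hC (.semi (.fm _) hΔ))
      exact ⟨max l1 l2 + 1, by omega, .impL Γt' he d1 d2⟩
  | impR h ih =>
      intro Γ' hΓ
      obtain ⟨l, hl, d⟩ := ih _ (.semi hΓ (.fm _))
      exact ⟨l + 1, by omega, .impR d⟩
  | starL h ih =>
      intro Γ' hΓ
      obtain ⟨C', X', hC, hX, rfl⟩ := rep_fill_inv _ hΓ
      rcases rep_fm_inv hX with rfl | ⟨A', B', hs, rfl⟩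
      · obtain ⟨l, hl, d⟩ := ih _ (rep_fill hC (RpB.refl _))
        exact ⟨l + 1, by omega, .starL d⟩
      · injection hs with e1 e2
        subst e1; subst e2
        obtain ⟨l, hl, d⟩ := ih _ (rep_fill hC (RpB.refl _))
        exact ⟨l, by omega, d⟩
  | starR hc h1 h2 ih1 ih2 =>
      intro Γ'' hΓ
      rcases hc with hc | hc
      · obtain ⟨R₁', R₂', hr1, hr2, hcand⟩ := candidate_rep hc hΓ
        obtain ⟨l1, hl1, d1⟩ := ih1 R₁' hr1
        obtain ⟨l2, hl2, d2⟩ := ih2 R₂' hr2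
        exact ⟨max l1 l2 + 1, by omega, .starR (Or.inl hcand) d1 d2⟩
      · obtain ⟨R₂', R₁', hr2, hr1, hcand⟩ := candidate_rep hc hΓ
        obtain ⟨l1, hl1, d1⟩ := ih1 R₁' hr1
        obtain ⟨l2, hl2, d2⟩ := ih2 R₂' hr2
        exact ⟨max l1 l2 + 1, by omega, .starR (Or.inr hcand) d1 d2⟩
  | wandL Γ'o Rej Rei Γt hE hdisj h1 h2 ih1 ih2 =>
      intro y hy
      obtain ⟨C', X', hC, hX, rfl⟩ := rep_fill_inv _ hy
      rcases hdisj with ⟨rfl, rfl, rfl⟩ | ⟨Γ'b, Rj, rfl, rfl, hc⟩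
      · simp only [ocomma] at hX ⊢
        obtain ⟨a', ha, he⟩ := essence_rep hE X' hX
        obtain ⟨Γt', rfl⟩ := rep_osemi_fm_inv ha (by rintro B C ⟨⟩)
        obtain ⟨l2, hl2, d2⟩ := ih2 _ (rep_fill hC (.semi (RpB.refl _) hX))
        have d := LBIZ.wandL (Cand := Candidate) (cut := false)
          none none (.fm .mtop) Γt' he (Or.inl ⟨rfl, rfl, rfl⟩) h1 d2
        exact ⟨max _ l2 + 1, by omega, d⟩
      · simp only [ocomma] at hX ⊢
        obtain ⟨Γ'', Δ₁, rfl, hΓ'', hΔ⟩ := rep_comma_inv hX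
        obtain ⟨a', ha, he⟩ := essence_rep hE Δ₁ hΔ
        obtain ⟨Γt', rfl⟩ := rep_osemi_fm_inv ha (by rintro B C ⟨⟩)
        rcases hc with hc | hc
        · obtain ⟨Rei', Rj', hrei, hrj, hcand⟩ := candidate_rep hc hΓ''
          obtain ⟨l1, hl1, d1⟩ := ih1 Rei' hrei
          obtain ⟨l2, hl2, d2⟩ := ih2 _
            (rep_fill hC (.semi (.comma hrj (.fm _)) (.comma hΓ'' hΔ)))
          have d := LBIZ.wandL (Cand := Candidate) (cut := false)
            (some Γ'') (some Rj') Rei' Γt' he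
            (Or.inr ⟨Γ'', Rj', rfl, rfl, Or.inl hcand⟩) d1 d2
          exact ⟨max l1 l2 + 1, by omega, d⟩
        · obtain ⟨Rj', Rei', hrj, hrei, hcand⟩ := candidate_rep hc hΓ''
          obtain ⟨l1, hl1, d1⟩ := ih1 Rei' hrei
          obtain ⟨l2, hl2, d2⟩ := ih2 _
            (rep_fill hC (.semi (.comma hrj (.fm _)) (.comma hΓ'' hΔ)))
          have d := LBIZ.wandL (Cand := Candidate) (cut := false)
            (some Γ'') (some Rj') Rei' Γt' he
            (Or.inr ⟨Γ'', Rj', rfl, rfl, Or.inr hcand⟩) d1 d2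
          exact ⟨max l1 l2 + 1, by omega, d⟩
  | wandR h ih =>
      intro Γ' hΓ
      obtain ⟨l, hl, d⟩ := ih _ (.comma hΓ (.fm _))
      exact ⟨l + 1, by omega, .wandR d⟩
  | equiv hEq h ih =>
      intro Γ'' hΓ
      obtain ⟨a', h1, h2⟩ := (rep_bunchEq hEq).2 Γ'' hΓ
      obtain ⟨l, hl, d⟩ := ih a' h1
      exact ⟨l, hl, .equiv h2 d⟩
  | cutRule hcut _ _ _ _ => cases hcut

/-- *L is depth-preserving invertible in LBIZ. -/
theorem lbiz_starL_invertible (C : Ctx) (F G H : BI) (k : Nat)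
    (h : LBIZc (C.fill (.fm (.star F G))) H k) :
    ∃ l ≤ k, LBIZc (C.fill (.comma (.fm F) (.fm G))) H l :=
  lbiz_rep h _ (rep_fill (RpCtx.refl C) (RpB.star F G))
end

section
/- The additive unit is depth-preserving invertible in LBIZ: if Γ(Γ₁; ⊤) ⊢ H is derivable in LBIZ with derivation depth at most k, then Γ(Γ₁) ⊢ H is derivable in LBIZ with derivation depth at most k. -/
/-! ### Auxiliary development for Statement 8 -/

/-- One-step deletion of an additive-unit conjunct `⊤`. -/
inductive TDel : Bunch → Bunch → Prop
  | delL (a : Bunch) : TDel (.semi (.fm .top) a) a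
  | delR (a : Bunch) : TDel (.semi a (.fm .top)) a
  | semiL {a a' : Bunch} (b : Bunch) : TDel a a' → TDel (.semi a b) (.semi a' b)
  | semiR (a : Bunch) {b b' : Bunch} : TDel b b' → TDel (.semi a b) (.semi a b')
  | commaL {a a' : Bunch} (b : Bunch) : TDel a a' → TDel (.comma a b) (.comma a' b)
  | commaR (a : Bunch) {b b' : Bunch} : TDel b b' → TDel (.comma a b) (.comma a b')

/-- One-step replacement of a `⊤` leaf by an arbitrary bunch. -/
inductive Repl : Bunch → Bunch → Prop
  | here (g : Bunch) : Repl (.fm .top) g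
  | semiL {a a' : Bunch} (b : Bunch) : Repl a a' → Repl (.semi a b) (.semi a' b)
  | semiR (a : Bunch) {b b' : Bunch} : Repl b b' → Repl (.semi a b) (.semi a b')
  | commaL {a a' : Bunch} (b : Bunch) : Repl a a' → Repl (.comma a b) (.comma a' b)
  | commaR (a : Bunch) {b b' : Bunch} : Repl b b' → Repl (.comma a b) (.comma a b')

theorem tdel_fm_inv {φ : BI} {Y : Bunch} (h : TDel (.fm φ) Y) : False := by
  nomatch h

theorem tdel_semi_inv {u v Y : Bunch} (h : TDel (.semi u v) Y) :
    (u = .fm .top ∧ Y = v) ∨ (v = .fm .top ∧ Y = u) ∨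
    (∃ u', TDel u u' ∧ Y = .semi u' v) ∨ (∃ v', TDel v v' ∧ Y = .semi u v') := by
  cases h with
  | delL a => exact .inl ⟨rfl, rfl⟩
  | delR a => exact .inr (.inl ⟨rfl, rfl⟩)
  | semiL b h => exact .inr (.inr (.inl ⟨_, h, rfl⟩))
  | semiR a h => exact .inr (.inr (.inr ⟨_, h, rfl⟩))

theorem tdel_comma_inv {u v Y : Bunch} (h : TDel (.comma u v) Y) :
    (∃ u', TDel u u' ∧ Y = .comma u' v) ∨ (∃ v', TDel v v' ∧ Y = .comma u v') := by
  cases h with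
  | commaL b h => exact .inl ⟨_, h, rfl⟩
  | commaR a h => exact .inr ⟨_, h, rfl⟩

theorem repl_fm_inv {φ : BI} {Y : Bunch} (h : Repl (.fm φ) Y) : φ = .top := by
  cases h; rfl

theorem repl_semi_inv {u v Y : Bunch} (h : Repl (.semi u v) Y) :
    (∃ u', Repl u u' ∧ Y = .semi u' v) ∨ (∃ v', Repl v v' ∧ Y = .semi u v') := by
  cases h with
  | semiL b h => exact .inl ⟨_, h, rfl⟩
  | semiR a h => exact .inr ⟨_, h, rfl⟩

theorem repl_comma_inv {u v Y : Bunch} (h : Repl (.comma u v) Y) :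
    (∃ u', Repl u u' ∧ Y = .comma u' v) ∨ (∃ v', Repl v v' ∧ Y = .comma u v') := by
  cases h with
  | commaL b h => exact .inl ⟨_, h, rfl⟩
  | commaR a h => exact .inr ⟨_, h, rfl⟩

theorem fillBeq (C : Ctx) {X Y : Bunch} (h : BunchEq X Y) :
    BunchEq (C.fill X) (C.fill Y) := by
  induction C with
  | hole => exact h
  | semiL C b ih => exact .semiCongr ih (.refl b)
  | semiR b C ih => exact .semiCongr (.refl b) ih
  | commaL C b ih => exact .commaCongr ih (.refl b)
  | commaR b C ih => exact .commaCongr (.refl b) ih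

theorem fillTDelCongr (C : Ctx) {X Y : Bunch} (h : TDel X Y) :
    TDel (C.fill X) (C.fill Y) := by
  induction C with
  | hole => exact h
  | semiL C b ih => exact .semiL b ih
  | semiR b C ih => exact .semiR b ih
  | commaL C b ih => exact .commaL b ih
  | commaR b C ih => exact .commaR b ih

theorem fillReplCongr (C : Ctx) {X Y : Bunch} (h : Repl X Y) :
    Repl (C.fill X) (C.fill Y) := by
  induction C with
  | hole => exact h
  | semiL C b ih => exact .semiL b ih
  | semiR b C ih => exact .semiR b ih
  | commaL C b ih => exact .commaL b ih
  | commaR b C ih => exact .commaR b ih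

theorem fillFm {C : Ctx} {X : Bunch} {F : BI} (h : C.fill X = .fm F) :
    C = .hole ∧ X = .fm F := by
  cases C with
  | hole => exact ⟨rfl, h⟩
  | semiL C b => simp [Ctx.fill] at h
  | semiR b C => simp [Ctx.fill] at h
  | commaL C b => simp [Ctx.fill] at h
  | commaR b C => simp [Ctx.fill] at h

theorem beq_fm {a b : Bunch} (h : BunchEq a b) : ∀ F : BI, a = .fm F ↔ b = .fm F := by
  induction h with
  | refl Γ => exact fun F => Iff.rfl
  | symm h ih => exact fun F => (ih F).symm
  | trans h1 h2 ih1 ih2 => exact fun F => (ih1 F).trans (ih2 F)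
  | semiComm a b => simp
  | semiAssoc a b c => simp
  | commaComm a b => simp
  | commaAssoc a b c => simp
  | semiCongr h1 h2 ih1 ih2 => simp
  | commaCongr h1 h2 ih1 ih2 => simp
theorem beq_tdel {a b : Bunch} (h : BunchEq a b) :
    (∀ {c}, TDel b c → ∃ a', TDel a a' ∧ BunchEq a' c) ∧
    (∀ {c}, TDel a c → ∃ b', TDel b b' ∧ BunchEq b' c) := by
  induction h with
  | refl Γ => exact ⟨fun hc => ⟨_, hc, .refl _⟩, fun hc => ⟨_, hc, .refl _⟩⟩
  | symm h ih => exact ⟨ih.2, ih.1⟩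
  | trans h1 h2 ih1 ih2 =>
    refine ⟨fun hc => ?_, fun hc => ?_⟩
    · obtain ⟨b', hb, he⟩ := ih2.1 hc
      obtain ⟨a', ha, he'⟩ := ih1.1 hb
      exact ⟨a', ha, he'.trans he⟩
    · obtain ⟨b', hb, he⟩ := ih1.2 hc
      obtain ⟨c', hcc, he'⟩ := ih2.2 hb
      exact ⟨c', hcc, he'.trans he⟩
  | semiComm x y =>
    refine ⟨fun hc => ?_, fun hc => ?_⟩
    · rcases tdel_semi_inv hc with ⟨rfl, rfl⟩ | ⟨rfl, rfl⟩ | ⟨u', hu, rfl⟩ | ⟨v', hv, rfl⟩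
      · exact ⟨_, .delR _, .refl _⟩
      · exact ⟨_, .delL _, .refl _⟩
      · exact ⟨_, .semiR _ hu, .semiComm _ _⟩
      · exact ⟨_, .semiL _ hv, .semiComm _ _⟩
    · rcases tdel_semi_inv hc with ⟨rfl, rfl⟩ | ⟨rfl, rfl⟩ | ⟨u', hu, rfl⟩ | ⟨v', hv, rfl⟩
      · exact ⟨_, .delR _, .refl _⟩
      · exact ⟨_, .delL _, .refl _⟩
      · exact ⟨_, .semiR _ hu, .semiComm _ _⟩
      · exact ⟨_, .semiL _ hv, .semiComm _ _⟩
  | semiAssoc x y z =>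
    refine ⟨fun hc => ?_, fun hc => ?_⟩
    · -- hc : TDel (x;(y;z)) c
      rcases tdel_semi_inv hc with ⟨rfl, rfl⟩ | ⟨h1, rfl⟩ | ⟨u', hu, rfl⟩ | ⟨v', hv, rfl⟩
      · exact ⟨_, .semiL _ (.delL _), .refl _⟩
      · exact absurd h1 (by simp)
      · exact ⟨_, .semiL _ (.semiL _ hu), .semiAssoc _ _ _⟩
      · rcases tdel_semi_inv hv with ⟨rfl, rfl⟩ | ⟨rfl, rfl⟩ | ⟨u', hu, rfl⟩ | ⟨w', hw, rfl⟩
        · exact ⟨_, .semiL _ (.delR _), .refl _⟩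
        · exact ⟨_, .delR _, .refl _⟩
        · exact ⟨_, .semiL _ (.semiR _ hu), .semiAssoc _ _ _⟩
        · exact ⟨_, .semiR _ hw, .semiAssoc _ _ _⟩
    · -- hc : TDel ((x;y);z) c
      rcases tdel_semi_inv hc with ⟨h1, rfl⟩ | ⟨rfl, rfl⟩ | ⟨u', hu, rfl⟩ | ⟨v', hv, rfl⟩
      · exact absurd h1 (by simp)
      · exact ⟨_, .semiR _ (.delR _), .refl _⟩
      · rcases tdel_semi_inv hu with ⟨rfl, rfl⟩ | ⟨rfl, rfl⟩ | ⟨w', hw, rfl⟩ | ⟨w', hw, rfl⟩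
        · exact ⟨_, .delL _, .refl _⟩
        · exact ⟨_, .semiR _ (.delL _), .refl _⟩
        · exact ⟨_, .semiL _ hw, .symm (.semiAssoc _ _ _)⟩
        · exact ⟨_, .semiR _ (.semiL _ hw), .symm (.semiAssoc _ _ _)⟩
      · exact ⟨_, .semiR _ (.semiR _ hv), .symm (.semiAssoc _ _ _)⟩
  | commaComm x y =>
    refine ⟨fun hc => ?_, fun hc => ?_⟩
    · rcases tdel_comma_inv hc with ⟨u', hu, rfl⟩ | ⟨v', hv, rfl⟩
      · exact ⟨_, .commaR _ hu, .commaComm _ _⟩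
      · exact ⟨_, .commaL _ hv, .commaComm _ _⟩
    · rcases tdel_comma_inv hc with ⟨u', hu, rfl⟩ | ⟨v', hv, rfl⟩
      · exact ⟨_, .commaR _ hu, .commaComm _ _⟩
      · exact ⟨_, .commaL _ hv, .commaComm _ _⟩
  | commaAssoc x y z =>
    refine ⟨fun hc => ?_, fun hc => ?_⟩
    · rcases tdel_comma_inv hc with ⟨u', hu, rfl⟩ | ⟨v', hv, rfl⟩
      · exact ⟨_, .commaL _ (.commaL _ hu), .commaAssoc _ _ _⟩
      · rcases tdel_comma_inv hv with ⟨u', hu, rfl⟩ | ⟨w', hw, rfl⟩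
        · exact ⟨_, .commaL _ (.commaR _ hu), .commaAssoc _ _ _⟩
        · exact ⟨_, .commaR _ hw, .commaAssoc _ _ _⟩
    · rcases tdel_comma_inv hc with ⟨u', hu, rfl⟩ | ⟨v', hv, rfl⟩
      · rcases tdel_comma_inv hu with ⟨w', hw, rfl⟩ | ⟨w', hw, rfl⟩
        · exact ⟨_, .commaL _ hw, .symm (.commaAssoc _ _ _)⟩
        · exact ⟨_, .commaR _ (.commaL _ hw), .symm (.commaAssoc _ _ _)⟩
      · exact ⟨_, .commaR _ (.commaR _ hv), .symm (.commaAssoc _ _ _)⟩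
  | semiCongr h1 h2 ih1 ih2 =>
    refine ⟨fun hc => ?_, fun hc => ?_⟩
    · rcases tdel_semi_inv hc with ⟨he, rfl⟩ | ⟨he, rfl⟩ | ⟨u', hu, rfl⟩ | ⟨v', hv, rfl⟩
      · have ha : _ = Bunch.fm .top := (beq_fm h1 .top).mpr he
        exact ⟨_, by rw [ha]; exact .delL _, h2⟩
      · have hb : _ = Bunch.fm .top := (beq_fm h2 .top).mpr he
        exact ⟨_, by rw [hb]; exact .delR _, h1⟩
      · obtain ⟨a₂, ha, he'⟩ := ih1.1 hu
        exact ⟨_, .semiL _ ha, .semiCongr he' h2⟩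
      · obtain ⟨b₂, hb, he'⟩ := ih2.1 hv
        exact ⟨_, .semiR _ hb, .semiCongr h1 he'⟩
    · rcases tdel_semi_inv hc with ⟨he, rfl⟩ | ⟨he, rfl⟩ | ⟨u', hu, rfl⟩ | ⟨v', hv, rfl⟩
      · have ha : _ = Bunch.fm .top := (beq_fm h1 .top).mp he
        exact ⟨_, by rw [ha]; exact .delL _, .symm h2⟩
      · have hb : _ = Bunch.fm .top := (beq_fm h2 .top).mp he
        exact ⟨_, by rw [hb]; exact .delR _, .symm h1⟩
      · obtain ⟨a₂, ha, he'⟩ := ih1.2 hu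
        exact ⟨_, .semiL _ ha, .semiCongr he' (.symm h2)⟩
      · obtain ⟨b₂, hb, he'⟩ := ih2.2 hv
        exact ⟨_, .semiR _ hb, .semiCongr (.symm h1) he'⟩
  | commaCongr h1 h2 ih1 ih2 =>
    refine ⟨fun hc => ?_, fun hc => ?_⟩
    · rcases tdel_comma_inv hc with ⟨u', hu, rfl⟩ | ⟨v', hv, rfl⟩
      · obtain ⟨a₂, ha, he'⟩ := ih1.1 hu
        exact ⟨_, .commaL _ ha, .commaCongr he' h2⟩
      · obtain ⟨b₂, hb, he'⟩ := ih2.1 hv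
        exact ⟨_, .commaR _ hb, .commaCongr h1 he'⟩
    · rcases tdel_comma_inv hc with ⟨u', hu, rfl⟩ | ⟨v', hv, rfl⟩
      · obtain ⟨a₂, ha, he'⟩ := ih1.2 hu
        exact ⟨_, .commaL _ ha, .commaCongr he' (.symm h2)⟩
      · obtain ⟨b₂, hb, he'⟩ := ih2.2 hv
        exact ⟨_, .commaR _ hb, .commaCongr (.symm h1) he'⟩
theorem beq_repl {a b : Bunch} (h : BunchEq a b) :
    (∀ {c}, Repl b c → ∃ a', Repl a a' ∧ BunchEq a' c) ∧
    (∀ {c}, Repl a c → ∃ b', Repl b b' ∧ BunchEq b' c) := by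
  induction h with
  | refl Γ => exact ⟨fun hc => ⟨_, hc, .refl _⟩, fun hc => ⟨_, hc, .refl _⟩⟩
  | symm h ih => exact ⟨ih.2, ih.1⟩
  | trans h1 h2 ih1 ih2 =>
    refine ⟨fun hc => ?_, fun hc => ?_⟩
    · obtain ⟨b', hb, he⟩ := ih2.1 hc
      obtain ⟨a', ha, he'⟩ := ih1.1 hb
      exact ⟨a', ha, he'.trans he⟩
    · obtain ⟨b', hb, he⟩ := ih1.2 hc
      obtain ⟨c', hcc, he'⟩ := ih2.2 hb
      exact ⟨c', hcc, he'.trans he⟩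
  | semiComm x y =>
    refine ⟨fun hc => ?_, fun hc => ?_⟩
    · rcases repl_semi_inv hc with ⟨u', hu, rfl⟩ | ⟨v', hv, rfl⟩
      · exact ⟨_, .semiR _ hu, .semiComm _ _⟩
      · exact ⟨_, .semiL _ hv, .semiComm _ _⟩
    · rcases repl_semi_inv hc with ⟨u', hu, rfl⟩ | ⟨v', hv, rfl⟩
      · exact ⟨_, .semiR _ hu, .semiComm _ _⟩
      · exact ⟨_, .semiL _ hv, .semiComm _ _⟩
  | semiAssoc x y z =>
    refine ⟨fun hc => ?_, fun hc => ?_⟩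
    · rcases repl_semi_inv hc with ⟨u', hu, rfl⟩ | ⟨v', hv, rfl⟩
      · exact ⟨_, .semiL _ (.semiL _ hu), .semiAssoc _ _ _⟩
      · rcases repl_semi_inv hv with ⟨u', hu, rfl⟩ | ⟨w', hw, rfl⟩
        · exact ⟨_, .semiL _ (.semiR _ hu), .semiAssoc _ _ _⟩
        · exact ⟨_, .semiR _ hw, .semiAssoc _ _ _⟩
    · rcases repl_semi_inv hc with ⟨u', hu, rfl⟩ | ⟨v', hv, rfl⟩
      · rcases repl_semi_inv hu with ⟨w', hw, rfl⟩ | ⟨w', hw, rfl⟩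
        · exact ⟨_, .semiL _ hw, .symm (.semiAssoc _ _ _)⟩
        · exact ⟨_, .semiR _ (.semiL _ hw), .symm (.semiAssoc _ _ _)⟩
      · exact ⟨_, .semiR _ (.semiR _ hv), .symm (.semiAssoc _ _ _)⟩
  | commaComm x y =>
    refine ⟨fun hc => ?_, fun hc => ?_⟩
    · rcases repl_comma_inv hc with ⟨u', hu, rfl⟩ | ⟨v', hv, rfl⟩
      · exact ⟨_, .commaR _ hu, .commaComm _ _⟩
      · exact ⟨_, .commaL _ hv, .commaComm _ _⟩
    · rcases repl_comma_inv hc with ⟨u', hu, rfl⟩ | ⟨v', hv, rfl⟩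
      · exact ⟨_, .commaR _ hu, .commaComm _ _⟩
      · exact ⟨_, .commaL _ hv, .commaComm _ _⟩
  | commaAssoc x y z =>
    refine ⟨fun hc => ?_, fun hc => ?_⟩
    · rcases repl_comma_inv hc with ⟨u', hu, rfl⟩ | ⟨v', hv, rfl⟩
      · exact ⟨_, .commaL _ (.commaL _ hu), .commaAssoc _ _ _⟩
      · rcases repl_comma_inv hv with ⟨u', hu, rfl⟩ | ⟨w', hw, rfl⟩
        · exact ⟨_, .commaL _ (.commaR _ hu), .commaAssoc _ _ _⟩
        · exact ⟨_, .commaR _ hw, .commaAssoc _ _ _⟩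
    · rcases repl_comma_inv hc with ⟨u', hu, rfl⟩ | ⟨v', hv, rfl⟩
      · rcases repl_comma_inv hu with ⟨w', hw, rfl⟩ | ⟨w', hw, rfl⟩
        · exact ⟨_, .commaL _ hw, .symm (.commaAssoc _ _ _)⟩
        · exact ⟨_, .commaR _ (.commaL _ hw), .symm (.commaAssoc _ _ _)⟩
      · exact ⟨_, .commaR _ (.commaR _ hv), .symm (.commaAssoc _ _ _)⟩
  | semiCongr h1 h2 ih1 ih2 =>
    refine ⟨fun hc => ?_, fun hc => ?_⟩
    · rcases repl_semi_inv hc with ⟨u', hu, rfl⟩ | ⟨v', hv, rfl⟩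
      · obtain ⟨a₂, ha, he'⟩ := ih1.1 hu
        exact ⟨_, .semiL _ ha, .semiCongr he' h2⟩
      · obtain ⟨b₂, hb, he'⟩ := ih2.1 hv
        exact ⟨_, .semiR _ hb, .semiCongr h1 he'⟩
    · rcases repl_semi_inv hc with ⟨u', hu, rfl⟩ | ⟨v', hv, rfl⟩
      · obtain ⟨a₂, ha, he'⟩ := ih1.2 hu
        exact ⟨_, .semiL _ ha, .semiCongr he' (.symm h2)⟩
      · obtain ⟨b₂, hb, he'⟩ := ih2.2 hv
        exact ⟨_, .semiR _ hb, .semiCongr (.symm h1) he'⟩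
  | commaCongr h1 h2 ih1 ih2 =>
    refine ⟨fun hc => ?_, fun hc => ?_⟩
    · rcases repl_comma_inv hc with ⟨u', hu, rfl⟩ | ⟨v', hv, rfl⟩
      · obtain ⟨a₂, ha, he'⟩ := ih1.1 hu
        exact ⟨_, .commaL _ ha, .commaCongr he' h2⟩
      · obtain ⟨b₂, hb, he'⟩ := ih2.1 hv
        exact ⟨_, .commaR _ hb, .commaCongr h1 he'⟩
    · rcases repl_comma_inv hc with ⟨u', hu, rfl⟩ | ⟨v', hv, rfl⟩
      · obtain ⟨a₂, ha, he'⟩ := ih1.2 hu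
        exact ⟨_, .commaL _ ha, .commaCongr he' (.symm h2)⟩
      · obtain ⟨b₂, hb, he'⟩ := ih2.2 hv
        exact ⟨_, .commaR _ hb, .commaCongr (.symm h1) he'⟩

/-- Decomposition of a ⊤-deletion inside a filled context. -/
theorem fillTDel (C : Ctx) {X Y : Bunch} (hX : X ≠ .fm .top) (h : TDel (C.fill X) Y) :
    (∃ C' : Ctx, (∀ Z, TDel (C.fill Z) (C'.fill Z)) ∧ Y = C'.fill X) ∨
    (∃ X', TDel X X' ∧ Y = C.fill X') := by
  induction C generalizing Y with
  | hole => exact .inr ⟨Y, h, rfl⟩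
  | semiL C b ih =>
    rcases tdel_semi_inv h with ⟨h1, rfl⟩ | ⟨h1, rfl⟩ | ⟨u', hu, rfl⟩ | ⟨v', hv, rfl⟩
    · exact absurd (fillFm h1).2 hX
    · subst h1
      exact .inl ⟨C, fun Z => .delR _, rfl⟩
    · rcases ih hu with ⟨C', prop, rfl⟩ | ⟨X', hX', rfl⟩
      · exact .inl ⟨.semiL C' b, fun Z => .semiL b (prop Z), rfl⟩
      · exact .inr ⟨X', hX', rfl⟩
    · exact .inl ⟨.semiL C v', fun Z => .semiR _ hv, rfl⟩
  | semiR b C ih =>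
    rcases tdel_semi_inv h with ⟨h1, rfl⟩ | ⟨h1, rfl⟩ | ⟨u', hu, rfl⟩ | ⟨v', hv, rfl⟩
    · subst h1
      exact .inl ⟨C, fun Z => .delL _, rfl⟩
    · exact absurd (fillFm h1).2 hX
    · exact .inl ⟨.semiR u' C, fun Z => .semiL _ hu, rfl⟩
    · rcases ih hv with ⟨C', prop, rfl⟩ | ⟨X', hX', rfl⟩
      · exact .inl ⟨.semiR b C', fun Z => .semiR b (prop Z), rfl⟩
      · exact .inr ⟨X', hX', rfl⟩
  | commaL C b ih =>
    rcases tdel_comma_inv h with ⟨u', hu, rfl⟩ | ⟨v', hv, rfl⟩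
    · rcases ih hu with ⟨C', prop, rfl⟩ | ⟨X', hX', rfl⟩
      · exact .inl ⟨.commaL C' b, fun Z => .commaL b (prop Z), rfl⟩
      · exact .inr ⟨X', hX', rfl⟩
    · exact .inl ⟨.commaL C v', fun Z => .commaR _ hv, rfl⟩
  | commaR b C ih =>
    rcases tdel_comma_inv h with ⟨u', hu, rfl⟩ | ⟨v', hv, rfl⟩
    · exact .inl ⟨.commaR u' C, fun Z => .commaL _ hu, rfl⟩
    · rcases ih hv with ⟨C', prop, rfl⟩ | ⟨X', hX', rfl⟩
      · exact .inl ⟨.commaR b C', fun Z => .commaR b (prop Z), rfl⟩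
      · exact .inr ⟨X', hX', rfl⟩

/-- Decomposition of a ⊤-replacement inside a filled context. -/
theorem fillRepl (C : Ctx) {X Y : Bunch} (h : Repl (C.fill X) Y) :
    (∃ C' : Ctx, (∀ Z, Repl (C.fill Z) (C'.fill Z)) ∧ Y = C'.fill X) ∨
    (∃ X', Repl X X' ∧ Y = C.fill X') := by
  induction C generalizing Y with
  | hole => exact .inr ⟨Y, h, rfl⟩
  | semiL C b ih =>
    rcases repl_semi_inv h with ⟨u', hu, rfl⟩ | ⟨v', hv, rfl⟩
    · rcases ih hu with ⟨C', prop, rfl⟩ | ⟨X', hX', rfl⟩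
      · exact .inl ⟨.semiL C' b, fun Z => .semiL b (prop Z), rfl⟩
      · exact .inr ⟨X', hX', rfl⟩
    · exact .inl ⟨.semiL C v', fun Z => .semiR _ hv, rfl⟩
  | semiR b C ih =>
    rcases repl_semi_inv h with ⟨u', hu, rfl⟩ | ⟨v', hv, rfl⟩
    · exact .inl ⟨.semiR u' C, fun Z => .semiL _ hu, rfl⟩
    · rcases ih hv with ⟨C', prop, rfl⟩ | ⟨X', hX', rfl⟩
      · exact .inl ⟨.semiR b C', fun Z => .semiR b (prop Z), rfl⟩
      · exact .inr ⟨X', hX', rfl⟩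
  | commaL C b ih =>
    rcases repl_comma_inv h with ⟨u', hu, rfl⟩ | ⟨v', hv, rfl⟩
    · rcases ih hu with ⟨C', prop, rfl⟩ | ⟨X', hX', rfl⟩
      · exact .inl ⟨.commaL C' b, fun Z => .commaL b (prop Z), rfl⟩
      · exact .inr ⟨X', hX', rfl⟩
    · exact .inl ⟨.commaL C v', fun Z => .commaR _ hv, rfl⟩
  | commaR b C ih =>
    rcases repl_comma_inv h with ⟨u', hu, rfl⟩ | ⟨v', hv, rfl⟩
    · exact .inl ⟨.commaR u' C, fun Z => .commaL _ hu, rfl⟩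
    · rcases ih hv with ⟨C', prop, rfl⟩ | ⟨X', hX', rfl⟩
      · exact .inl ⟨.commaR b C', fun Z => .commaR b (prop Z), rfl⟩
      · exact .inr ⟨X', hX', rfl⟩
theorem essence_src {a₀ a b : Bunch} (h0 : BunchEq a₀ a) (h : Essence a b) : Essence a₀ b := by
  induction h with
  | ofEq h => exact .ofEq (h0.trans h)
  | insert C Γ' Δ hp ih => exact .insert C Γ' Δ ih
  | insertSemi C Γ' Γ'' Δ hp ih => exact .insertSemi C Γ' Γ'' Δ ih
  | congr hp hbe ih => exact .congr ih hbe

theorem essence_fm {a b : Bunch} (h : Essence a b) : ∀ {F : BI}, b = .fm F → a = .fm F := by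
  induction h with
  | ofEq h => exact fun e => (beq_fm h _).mpr e
  | insert C Γ' Δ hp ih =>
    intro F e
    have := (fillFm e).2
    simp at this
  | insertSemi C Γ' Γ'' Δ hp ih =>
    intro F e
    have := (fillFm e).2
    simp at this
  | congr hp hbe ih => exact fun e => ih ((beq_fm hbe _).mpr e)

theorem essence_osemi_ne_top {Γt : Option Bunch} {F : BI} {Δ : Bunch} (hF : F ≠ BI.top)
    (hE : Essence (osemi Γt (.fm F)) Δ) : Δ ≠ .fm .top := by
  intro e
  have h := essence_fm hE e
  cases Γt with
  | none => simp only [osemi] at h; exact hF (by injection h)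
  | some Γ => simp only [osemi] at h; simp at h

/-- Deleting a ⊤ inside an essence. -/
theorem essence_tdel {a b : Bunch} (h : Essence a b) :
    ∀ {b' : Bunch}, TDel b b' → ∃ a', (a' = a ∨ TDel a a') ∧ Essence a' b' := by
  induction h with
  | ofEq hbe =>
    intro b' hd
    obtain ⟨a', ha, he⟩ := (beq_tdel hbe).1 hd
    exact ⟨a', .inr ha, .ofEq he⟩
  | insert C Γ' Δ hp ih =>
    intro b' hd
    rcases fillTDel C (by simp) hd with ⟨C', prop, rfl⟩ | ⟨X', hX, rfl⟩
    · obtain ⟨a', cond, he⟩ := ih (prop Γ')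
      exact ⟨a', cond, .insert C' Γ' Δ he⟩
    · rcases tdel_comma_inv hX with ⟨u', hu, rfl⟩ | ⟨v', hv, rfl⟩
      · obtain ⟨a', cond, he⟩ := ih (fillTDelCongr C hu)
        exact ⟨a', cond, .insert C u' Δ he⟩
      · rcases Δ with _ | D
        · exact (tdel_fm_inv hv).elim
        · rcases tdel_semi_inv hv with ⟨h1, rfl⟩ | ⟨h1, rfl⟩ | ⟨u', hu, rfl⟩ | ⟨D₂, hD, rfl⟩
          · exact absurd h1 (by simp)
          · exact ⟨a, .inl rfl, .insert C Γ' none hp⟩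
          · exact (tdel_fm_inv hu).elim
          · exact ⟨a, .inl rfl, .insert C Γ' (some D₂) hp⟩
  | insertSemi C Γ' Γ'' Δ hp ih =>
    intro b' hd
    rcases fillTDel C (by simp) hd with ⟨C', prop, rfl⟩ | ⟨X', hX, rfl⟩
    · obtain ⟨a', cond, he⟩ := ih (prop _)
      exact ⟨a', cond, .insertSemi C' Γ' Γ'' Δ he⟩
    · rcases tdel_semi_inv hX with ⟨h1, rfl⟩ | ⟨h1, rfl⟩ | ⟨u', hu, rfl⟩ | ⟨v', hv, rfl⟩
      · exact absurd h1 (by simp)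
      · subst h1
        obtain ⟨a', cond, he⟩ := ih (fillTDelCongr C (.delR Γ'))
        exact ⟨a', cond, .insert C Γ' Δ he⟩
      · rcases tdel_comma_inv hu with ⟨w, hw, rfl⟩ | ⟨w, hw, rfl⟩
        · obtain ⟨a', cond, he⟩ := ih (fillTDelCongr C (.semiL Γ'' hw))
          exact ⟨a', cond, .insertSemi C w Γ'' Δ he⟩
        · rcases Δ with _ | D
          · exact (tdel_fm_inv hw).elim
          · rcases tdel_semi_inv hw with ⟨h1, rfl⟩ | ⟨h1, rfl⟩ | ⟨u', hu', rfl⟩ | ⟨D₂, hD, rfl⟩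
            · exact absurd h1 (by simp)
            · exact ⟨a, .inl rfl, .insertSemi C Γ' Γ'' none hp⟩
            · exact (tdel_fm_inv hu').elim
            · exact ⟨a, .inl rfl, .insertSemi C Γ' Γ'' (some D₂) hp⟩
      · obtain ⟨a', cond, he⟩ := ih (fillTDelCongr C (.semiR Γ' hv))
        exact ⟨a', cond, .insertSemi C Γ' v' Δ he⟩
  | congr hp hbe ih =>
    intro b' hd
    obtain ⟨b₁, hd₁, he₁⟩ := (beq_tdel hbe).1 hd
    obtain ⟨a', cond, he⟩ := ih hd₁
    exact ⟨a', cond, he.congr he₁⟩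

/-- Replacing a ⊤ leaf inside an essence. -/
theorem essence_repl {a b : Bunch} (h : Essence a b) :
    ∀ {b' : Bunch}, Repl b b' → ∃ a', (a' = a ∨ Repl a a') ∧ Essence a' b' := by
  induction h with
  | ofEq hbe =>
    intro b' hd
    obtain ⟨a', ha, he⟩ := (beq_repl hbe).1 hd
    exact ⟨a', .inr ha, .ofEq he⟩
  | insert C Γ' Δ hp ih =>
    intro b' hd
    rcases fillRepl C hd with ⟨C', prop, rfl⟩ | ⟨X', hX, rfl⟩
    · obtain ⟨a', cond, he⟩ := ih (prop Γ')
      exact ⟨a', cond, .insert C' Γ' Δ he⟩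
    · rcases repl_comma_inv hX with ⟨u', hu, rfl⟩ | ⟨v', hv, rfl⟩
      · obtain ⟨a', cond, he⟩ := ih (fillReplCongr C hu)
        exact ⟨a', cond, .insert C u' Δ he⟩
      · rcases Δ with _ | D
        · exact absurd (repl_fm_inv hv) (by simp)
        · rcases repl_semi_inv hv with ⟨u', hu, rfl⟩ | ⟨D₂, hD, rfl⟩
          · exact absurd (repl_fm_inv hu) (by simp)
          · exact ⟨a, .inl rfl, .insert C Γ' (some D₂) hp⟩
  | insertSemi C Γ' Γ'' Δ hp ih =>
    intro b' hd
    rcases fillRepl C hd with ⟨C', prop, rfl⟩ | ⟨X', hX, rfl⟩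
    · obtain ⟨a', cond, he⟩ := ih (prop _)
      exact ⟨a', cond, .insertSemi C' Γ' Γ'' Δ he⟩
    · rcases repl_semi_inv hX with ⟨u', hu, rfl⟩ | ⟨v', hv, rfl⟩
      · rcases repl_comma_inv hu with ⟨w, hw, rfl⟩ | ⟨w, hw, rfl⟩
        · obtain ⟨a', cond, he⟩ := ih (fillReplCongr C (.semiL Γ'' hw))
          exact ⟨a', cond, .insertSemi C w Γ'' Δ he⟩
        · rcases Δ with _ | D
          · exact absurd (repl_fm_inv hw) (by simp)
          · rcases repl_semi_inv hw with ⟨u', hu', rfl⟩ | ⟨D₂, hD, rfl⟩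
            · exact absurd (repl_fm_inv hu') (by simp)
            · exact ⟨a, .inl rfl, .insertSemi C Γ' Γ'' (some D₂) hp⟩
      · obtain ⟨a', cond, he⟩ := ih (fillReplCongr C (.semiR Γ' hv))
        exact ⟨a', cond, .insertSemi C Γ' v' Δ he⟩
  | congr hp hbe ih =>
    intro b' hd
    obtain ⟨b₁, hd₁, he₁⟩ := (beq_repl hbe).1 hd
    obtain ⟨a', cond, he⟩ := ih hd₁
    exact ⟨a', cond, he.congr he₁⟩

theorem osemi_tdel {Γt : Option Bunch} {F : BI} {a' : Bunch} (hF : F ≠ BI.top)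
    (h : TDel (osemi Γt (.fm F)) a') : ∃ Γt₂, BunchEq (osemi Γt₂ (.fm F)) a' := by
  cases Γt with
  | none => exact (tdel_fm_inv h).elim
  | some Γ =>
    rcases tdel_semi_inv h with ⟨h1, rfl⟩ | ⟨h1, rfl⟩ | ⟨u', hu, rfl⟩ | ⟨v', hv, rfl⟩
    · exact ⟨none, .refl _⟩
    · exact absurd (by injection h1) hF
    · exact ⟨some u', .refl _⟩
    · exact (tdel_fm_inv hv).elim

theorem osemi_repl {Γt : Option Bunch} {F : BI} {a' : Bunch} (hF : F ≠ BI.top)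
    (h : Repl (osemi Γt (.fm F)) a') : ∃ Γt₂, BunchEq (osemi Γt₂ (.fm F)) a' := by
  cases Γt with
  | none => exact absurd (repl_fm_inv h) hF
  | some Γ =>
    rcases repl_semi_inv h with ⟨u', hu, rfl⟩ | ⟨v', hv, rfl⟩
    · exact ⟨some u', .refl _⟩
    · exact absurd (repl_fm_inv hv) hF

theorem essence_osemi_tdel {Γt : Option Bunch} {F : BI} {Δ Δ₂ : Bunch} (hF : F ≠ BI.top)
    (hE : Essence (osemi Γt (.fm F)) Δ) (hd : TDel Δ Δ₂) :
    ∃ Γt₂, Essence (osemi Γt₂ (.fm F)) Δ₂ := by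
  obtain ⟨a', cond, hE'⟩ := essence_tdel hE hd
  rcases cond with rfl | hstep
  · exact ⟨Γt, hE'⟩
  · obtain ⟨Γt₂, hbe⟩ := osemi_tdel hF hstep
    exact ⟨Γt₂, essence_src hbe hE'⟩

theorem essence_osemi_repl {Γt : Option Bunch} {F : BI} {Δ Δ₂ : Bunch} (hF : F ≠ BI.top)
    (hE : Essence (osemi Γt (.fm F)) Δ) (hd : Repl Δ Δ₂) :
    ∃ Γt₂, Essence (osemi Γt₂ (.fm F)) Δ₂ := by
  obtain ⟨a', cond, hE'⟩ := essence_repl hE hd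
  rcases cond with rfl | hstep
  · exact ⟨Γt, hE'⟩
  · obtain ⟨Γt₂, hbe⟩ := osemi_repl hF hstep
    exact ⟨Γt₂, essence_src hbe hE'⟩
/-- A single "candidate adjustment" step. -/
def CStep (a b : Bunch) : Prop := b = a ∨ TDel a b ∨ Repl a b

theorem wle_repl {a b : Bunch} (h : Wle a b) :
    ∀ {b' : Bunch}, Repl b b' → ∃ a', (a' = a ∨ Repl a a') ∧ Wle a' b' := by
  induction h with
  | ofEq hbe =>
    intro b' hd
    obtain ⟨a', ha, he⟩ := (beq_repl hbe).1 hd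
    exact ⟨a', .inr ha, .ofEq he⟩
  | weak C Δ w =>
    intro b' hd
    rcases fillRepl C hd with ⟨C', prop, rfl⟩ | ⟨X', hX, rfl⟩
    · exact ⟨C'.fill Δ, .inr (prop Δ), .weak C' Δ w⟩
    · rcases repl_semi_inv hX with ⟨u', hu, rfl⟩ | ⟨v', hv, rfl⟩
      · exact ⟨C.fill u', .inr (fillReplCongr C hu), .weak C u' w⟩
      · exact ⟨C.fill Δ, .inl rfl, .weak C Δ v'⟩
  | trans h1 h2 ih1 ih2 =>
    intro b' hd
    obtain ⟨m', cond, hw⟩ := ih2 hd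
    rcases cond with rfl | hr
    · exact ⟨_, .inl rfl, h1.trans hw⟩
    · obtain ⟨a', cond', hw'⟩ := ih1 hr
      exact ⟨a', cond', hw'.trans hw⟩

theorem wle_tdel {a b : Bunch} (h : Wle a b) :
    ∀ {b' : Bunch}, TDel b b' → ∃ a', CStep a a' ∧ Wle a' b' := by
  induction h with
  | ofEq hbe =>
    intro b' hd
    obtain ⟨a', ha, he⟩ := (beq_tdel hbe).1 hd
    exact ⟨a', .inr (.inl ha), .ofEq he⟩
  | weak C Δ w =>
    intro b' hd
    rcases fillTDel C (by simp) hd with ⟨C', prop, rfl⟩ | ⟨X', hX, rfl⟩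
    · exact ⟨C'.fill Δ, .inr (.inl (prop Δ)), .weak C' Δ w⟩
    · rcases tdel_semi_inv hX with ⟨h1, rfl⟩ | ⟨h1, rfl⟩ | ⟨u', hu, rfl⟩ | ⟨v', hv, rfl⟩
      · subst h1
        exact ⟨C.fill X', .inr (.inr (fillReplCongr C (.here X'))), .ofEq (.refl _)⟩
      · exact ⟨_, .inl rfl, .ofEq (.refl _)⟩
      · exact ⟨C.fill u', .inr (.inl (fillTDelCongr C hu)), .weak C u' w⟩
      · exact ⟨C.fill Δ, .inl rfl, .weak C Δ v'⟩
  | trans h1 h2 ih1 ih2 =>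
    intro b' hd
    obtain ⟨m', cond, hw⟩ := ih2 hd
    rcases cond with rfl | hr | hr
    · exact ⟨_, .inl rfl, h1.trans hw⟩
    · obtain ⟨a', cond', hw'⟩ := ih1 hr
      exact ⟨a', cond', hw'.trans hw⟩
    · obtain ⟨a', cond', hw'⟩ := wle_repl h1 hr
      rcases cond' with rfl | hrr
      · exact ⟨_, .inl rfl, hw'.trans hw⟩
      · exact ⟨a', .inr (.inr hrr), hw'.trans hw⟩

theorem cand_tdel {Γ R₁ R₂ Γ' : Bunch} (hc : Candidate Γ R₁ R₂) (hd : TDel Γ Γ') :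
    ∃ R₁' R₂', CStep R₁ R₁' ∧ CStep R₂ R₂' ∧ Candidate Γ' R₁' R₂' := by
  rcases hc with ⟨rfl, hw⟩ | hw
  · obtain ⟨R₁', s, hw'⟩ := wle_tdel hw hd
    exact ⟨R₁', _, s, .inl rfl, .inl ⟨rfl, hw'⟩⟩
  · obtain ⟨X, s, hw'⟩ := wle_tdel hw hd
    rcases s with rfl | sd | sr
    · exact ⟨R₁, R₂, .inl rfl, .inl rfl, .inr hw'⟩
    · rcases tdel_comma_inv sd with ⟨u', hu, rfl⟩ | ⟨v', hv, rfl⟩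
      · exact ⟨u', R₂, .inr (.inl hu), .inl rfl, .inr hw'⟩
      · exact ⟨R₁, v', .inl rfl, .inr (.inl hv), .inr hw'⟩
    · rcases repl_comma_inv sr with ⟨u', hu, rfl⟩ | ⟨v', hv, rfl⟩
      · exact ⟨u', R₂, .inr (.inr hu), .inl rfl, .inr hw'⟩
      · exact ⟨R₁, v', .inl rfl, .inr (.inr hv), .inr hw'⟩

theorem cand_repl {Γ R₁ R₂ Γ' : Bunch} (hc : Candidate Γ R₁ R₂) (hd : Repl Γ Γ') :
    ∃ R₁' R₂', (R₁' = R₁ ∨ Repl R₁ R₁') ∧ (R₂' = R₂ ∨ Repl R₂ R₂') ∧ Candidate Γ' R₁' R₂' := by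
  rcases hc with ⟨rfl, hw⟩ | hw
  · obtain ⟨R₁', s, hw'⟩ := wle_repl hw hd
    exact ⟨R₁', _, s, .inl rfl, .inl ⟨rfl, hw'⟩⟩
  · obtain ⟨X, s, hw'⟩ := wle_repl hw hd
    rcases s with rfl | sr
    · exact ⟨R₁, R₂, .inl rfl, .inl rfl, .inr hw'⟩
    · rcases repl_comma_inv sr with ⟨u', hu, rfl⟩ | ⟨v', hv, rfl⟩
      · exact ⟨u', R₂, .inr hu, .inl rfl, .inr hw'⟩
      · exact ⟨R₁, v', .inl rfl, .inr hv, .inr hw'⟩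

theorem lbiz_pos {Cand : Bunch → Bunch → Bunch → Prop} {cut : Bool} {Γ : Bunch} {H : BI}
    {m : Nat} (h : LBIZ Cand cut Γ H m) : 1 ≤ m := by
  induction h <;> first
    | exact Nat.succ_le_succ (Nat.zero_le _)
    | assumption
/-- Replacement of a ⊤ leaf is depth-preserving admissible in LBIZ. -/
theorem repl_adm : ∀ (n : Nat) {Γ : Bunch} {H : BI} {m : Nat},
    LBIZ Candidate false Γ H m → m ≤ n → ∀ (Γ' : Bunch), Repl Γ Γ' →
    LBIZ Candidate false Γ' H m := by
  intro n
  induction n with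
  | zero =>
    intro Γ H m h hm
    exact absurd (lbiz_pos h) (by omega)
  | succ n IHn =>
    intro Γ H m h
    have ap : ∀ {R R' : Bunch} {F₀ : BI} {d : Nat}, (R' = R ∨ Repl R R') →
        LBIZ Candidate false R F₀ d → d ≤ n → LBIZ Candidate false R' F₀ d := by
      rintro R R' F₀ d (rfl | hs) hR hdn
      · exact hR
      · exact IHn hR hdn _ hs
    induction h with
    | @id Γt p Δ hE =>
      intro _ Γ' hd
      obtain ⟨Γt₂, hE₂⟩ := essence_osemi_repl (by simp) hE hd
      exact .id Γt₂ p hE₂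
    | botL C H₀ =>
      intro _ Γ' hd
      rcases fillRepl C hd with ⟨C', prop, rfl⟩ | ⟨X', hX, rfl⟩
      · exact .botL C' H₀
      · exact absurd (repl_fm_inv hX) (by simp)
    | topR Γ₀ => exact fun _ Γ' _ => .topR Γ'
    | @mtopR Γt Δ hE =>
      intro _ Γ' hd
      obtain ⟨Γt₂, hE₂⟩ := essence_osemi_repl (by simp) hE hd
      exact .mtopR Γt₂ hE₂
    | @conjL C F G H₀ np hp ih =>
      intro hm Y hd
      rcases fillRepl C hd with ⟨C', prop, rfl⟩ | ⟨X', hX, rfl⟩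
      · exact .conjL (IHn hp (by omega) _ (prop _))
      · exact absurd (repl_fm_inv hX) (by simp)
    | @conjR Γ₀ F G n₁ n₂ h1 h2 ih1 ih2 =>
      intro hm Y hd
      exact .conjR (IHn h1 (by omega) _ hd) (IHn h2 (by omega) _ hd)
    | @disjL C F G H₀ n₁ n₂ h1 h2 ih1 ih2 =>
      intro hm Y hd
      rcases fillRepl C hd with ⟨C', prop, rfl⟩ | ⟨X', hX, rfl⟩
      · exact .disjL (IHn h1 (by omega) _ (prop _)) (IHn h2 (by omega) _ (prop _))
      · exact absurd (repl_fm_inv hX) (by simp)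
    | @disjR₁ Γ₀ F G n₁ hp ih =>
      intro hm Y hd
      exact .disjR₁ (IHn hp (by omega) _ hd)
    | @disjR₂ Γ₀ F G n₁ hp ih =>
      intro hm Y hd
      exact .disjR₂ (IHn hp (by omega) _ hd)
    | @impL Γt F G Δ C H₀ n₁ n₂ hE h1 h2 ih1 ih2 =>
      intro hm Y hd
      rcases fillRepl C hd with ⟨C', prop, rfl⟩ | ⟨Δ₂, hX, rfl⟩
      · exact .impL Γt hE h1 (IHn h2 (by omega) _ (prop _))
      · obtain ⟨Γt₂, hE₂⟩ := essence_osemi_repl (by simp) hE hX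
        exact .impL Γt₂ hE₂ (IHn h1 (by omega) _ hX)
          (IHn h2 (by omega) _ (fillReplCongr C (.semiR _ hX)))
    | @impR Γ₀ F G n₁ hp ih =>
      intro hm Y hd
      exact .impR (IHn hp (by omega) _ (.semiL _ hd))
    | @starL C F G H₀ np hp ih =>
      intro hm Y hd
      rcases fillRepl C hd with ⟨C', prop, rfl⟩ | ⟨X', hX, rfl⟩
      · exact .starL (IHn hp (by omega) _ (prop _))
      · exact absurd (repl_fm_inv hX) (by simp)
    | @starR Γ₀ R₁ R₂ F G n₁ n₂ hcand h1 h2 ih1 ih2 =>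
      intro hm Y hd
      rcases hcand with hc | hc
      · obtain ⟨R₁', R₂', s₁, s₂, hc'⟩ := cand_repl hc hd
        exact .starR (.inl hc') (ap s₁ h1 (by omega)) (ap s₂ h2 (by omega))
      · obtain ⟨R₂', R₁', s₂, s₁, hc'⟩ := cand_repl hc hd
        exact .starR (.inr hc') (ap s₁ h1 (by omega)) (ap s₂ h2 (by omega))
    | @wandL Γ'o Rej Rei Γt F G Δ C H₀ n₁ n₂ hE hcond h1 h2 ih1 ih2 =>
      intro hm Y hd
      rcases hcond with ⟨rfl, rfl, rfl⟩ | ⟨Γ₀, Rj, rfl, rfl, hcands⟩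
      · simp only [ocomma] at hd h2 ⊢
        rcases fillRepl C hd with ⟨C', prop, rfl⟩ | ⟨Δ₂, hX, rfl⟩
        · have := LBIZ.wandL (Cand := Candidate) (cut := false) none none (.fm .mtop) Γt hE
            (.inl ⟨rfl, rfl, rfl⟩) h1 (IHn h2 (by omega) _ (prop _))
          simpa [ocomma] using this
        · obtain ⟨Γt₂, hE₂⟩ := essence_osemi_repl (by simp) hE hX
          have := LBIZ.wandL (Cand := Candidate) (cut := false) none none (.fm .mtop) Γt₂ hE₂
            (.inl ⟨rfl, rfl, rfl⟩) h1 (IHn h2 (by omega) _ (fillReplCongr C (.semiR _ hX)))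
          simpa [ocomma] using this
      · simp only [ocomma] at hd h2 ⊢
        rcases fillRepl C hd with ⟨C', prop, rfl⟩ | ⟨X₂, hX, rfl⟩
        · have := LBIZ.wandL (Cand := Candidate) (cut := false) (some Γ₀) (some Rj) Rei Γt hE
            (.inr ⟨Γ₀, Rj, rfl, rfl, hcands⟩) h1 (IHn h2 (by omega) _ (prop _))
          simpa [ocomma] using this
        · rcases repl_comma_inv hX with ⟨Γ₁, hg, rfl⟩ | ⟨Δ₂, hg, rfl⟩
          · rcases hcands with hc | hc
            · obtain ⟨Rei', Rj', se, sj, hc'⟩ := cand_repl hc hg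
              have h1' := ap se h1 (by omega)
              have h2a := IHn h2 (by omega) _ (fillReplCongr C (.semiR _ (.commaL _ hg)))
              have h2b : LBIZ Candidate false
                  (C.fill (.semi (.comma Rj' (.fm G)) (.comma Γ₁ Δ))) H₀ n₂ := by
                rcases sj with rfl | hs
                · exact h2a
                · exact IHn h2a (by omega) _ (fillReplCongr C (.semiL _ (.commaL _ hs)))
              have := LBIZ.wandL (Cand := Candidate) (cut := false) (some Γ₁) (some Rj') Rei' Γt
                hE (.inr ⟨Γ₁, Rj', rfl, rfl, .inl hc'⟩) h1' h2b
              simpa [ocomma] using this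
            · obtain ⟨Rj', Rei', sj, se, hc'⟩ := cand_repl hc hg
              have h1' := ap se h1 (by omega)
              have h2a := IHn h2 (by omega) _ (fillReplCongr C (.semiR _ (.commaL _ hg)))
              have h2b : LBIZ Candidate false
                  (C.fill (.semi (.comma Rj' (.fm G)) (.comma Γ₁ Δ))) H₀ n₂ := by
                rcases sj with rfl | hs
                · exact h2a
                · exact IHn h2a (by omega) _ (fillReplCongr C (.semiL _ (.commaL _ hs)))
              have := LBIZ.wandL (Cand := Candidate) (cut := false) (some Γ₁) (some Rj') Rei' Γt
                hE (.inr ⟨Γ₁, Rj', rfl, rfl, .inr hc'⟩) h1' h2b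
              simpa [ocomma] using this
          · obtain ⟨Γt₂, hE₂⟩ := essence_osemi_repl (by simp) hE hg
            have h2' := IHn h2 (by omega) _ (fillReplCongr C (.semiR _ (.commaR _ hg)))
            have := LBIZ.wandL (Cand := Candidate) (cut := false) (some Γ₀) (some Rj) Rei Γt₂ hE₂
              (.inr ⟨Γ₀, Rj, rfl, rfl, hcands⟩) h1 h2'
            simpa [ocomma] using this
    | @wandR Γ₀ F G n₁ hp ih =>
      intro hm Y hd
      exact .wandR (IHn hp (by omega) _ (.commaL _ hd))
    | @equiv Γ₀ Γ₁ H₀ n₁ hbe hp ih =>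
      intro hm Y hd
      obtain ⟨Γ₂, hd₂, he₂⟩ := (beq_repl hbe).1 hd
      exact .equiv he₂ (ih hm _ hd₂)
    | @cutRule Γ₁ F C G n₁ n₂ hcut h1 h2 ih1 ih2 => simp at hcut
/-- Deletion of an additive-unit conjunct is depth-preserving admissible in LBIZ. -/
theorem tdel_adm : ∀ (n : Nat) {Γ : Bunch} {H : BI} {m : Nat},
    LBIZ Candidate false Γ H m → m ≤ n → ∀ (Γ' : Bunch), TDel Γ Γ' →
    LBIZ Candidate false Γ' H m := by
  intro n
  induction n with
  | zero =>
    intro Γ H m h hm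
    exact absurd (lbiz_pos h) (by omega)
  | succ n IHn =>
    intro Γ H m h
    have ap : ∀ {R R' : Bunch} {F₀ : BI} {d : Nat}, CStep R R' →
        LBIZ Candidate false R F₀ d → d ≤ n → LBIZ Candidate false R' F₀ d := by
      rintro R R' F₀ d (rfl | hs | hs) hR hdn
      · exact hR
      · exact IHn hR hdn _ hs
      · exact repl_adm d hR le_rfl _ hs
    induction h with
    | @id Γt p Δ hE =>
      intro _ Γ' hd
      obtain ⟨Γt₂, hE₂⟩ := essence_osemi_tdel (by simp) hE hd
      exact .id Γt₂ p hE₂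
    | botL C H₀ =>
      intro _ Γ' hd
      rcases fillTDel C (by simp) hd with ⟨C', prop, rfl⟩ | ⟨X', hX, rfl⟩
      · exact .botL C' H₀
      · exact (tdel_fm_inv hX).elim
    | topR Γ₀ => exact fun _ Γ' _ => .topR Γ'
    | @mtopR Γt Δ hE =>
      intro _ Γ' hd
      obtain ⟨Γt₂, hE₂⟩ := essence_osemi_tdel (by simp) hE hd
      exact .mtopR Γt₂ hE₂
    | @conjL C F G H₀ np hp ih =>
      intro hm Y hd
      rcases fillTDel C (by simp) hd with ⟨C', prop, rfl⟩ | ⟨X', hX, rfl⟩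
      · exact .conjL (IHn hp (by omega) _ (prop _))
      · exact (tdel_fm_inv hX).elim
    | @conjR Γ₀ F G n₁ n₂ h1 h2 ih1 ih2 =>
      intro hm Y hd
      exact .conjR (IHn h1 (by omega) _ hd) (IHn h2 (by omega) _ hd)
    | @disjL C F G H₀ n₁ n₂ h1 h2 ih1 ih2 =>
      intro hm Y hd
      rcases fillTDel C (by simp) hd with ⟨C', prop, rfl⟩ | ⟨X', hX, rfl⟩
      · exact .disjL (IHn h1 (by omega) _ (prop _)) (IHn h2 (by omega) _ (prop _))
      · exact (tdel_fm_inv hX).elim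
    | @disjR₁ Γ₀ F G n₁ hp ih =>
      intro hm Y hd
      exact .disjR₁ (IHn hp (by omega) _ hd)
    | @disjR₂ Γ₀ F G n₁ hp ih =>
      intro hm Y hd
      exact .disjR₂ (IHn hp (by omega) _ hd)
    | @impL Γt F G Δ C H₀ n₁ n₂ hE h1 h2 ih1 ih2 =>
      intro hm Y hd
      rcases fillTDel C (essence_osemi_ne_top (by simp) hE) hd with
        ⟨C', prop, rfl⟩ | ⟨Δ₂, hX, rfl⟩
      · exact .impL Γt hE h1 (IHn h2 (by omega) _ (prop _))
      · obtain ⟨Γt₂, hE₂⟩ := essence_osemi_tdel (by simp) hE hX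
        exact .impL Γt₂ hE₂ (IHn h1 (by omega) _ hX)
          (IHn h2 (by omega) _ (fillTDelCongr C (.semiR _ hX)))
    | @impR Γ₀ F G n₁ hp ih =>
      intro hm Y hd
      exact .impR (IHn hp (by omega) _ (.semiL _ hd))
    | @starL C F G H₀ np hp ih =>
      intro hm Y hd
      rcases fillTDel C (by simp) hd with ⟨C', prop, rfl⟩ | ⟨X', hX, rfl⟩
      · exact .starL (IHn hp (by omega) _ (prop _))
      · exact (tdel_fm_inv hX).elim
    | @starR Γ₀ R₁ R₂ F G n₁ n₂ hcand h1 h2 ih1 ih2 =>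
      intro hm Y hd
      rcases hcand with hc | hc
      · obtain ⟨R₁', R₂', s₁, s₂, hc'⟩ := cand_tdel hc hd
        exact .starR (.inl hc') (ap s₁ h1 (by omega)) (ap s₂ h2 (by omega))
      · obtain ⟨R₂', R₁', s₂, s₁, hc'⟩ := cand_tdel hc hd
        exact .starR (.inr hc') (ap s₁ h1 (by omega)) (ap s₂ h2 (by omega))
    | @wandL Γ'o Rej Rei Γt F G Δ C H₀ n₁ n₂ hE hcond h1 h2 ih1 ih2 =>
      intro hm Y hd
      rcases hcond with ⟨rfl, rfl, rfl⟩ | ⟨Γ₀, Rj, rfl, rfl, hcands⟩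
      · simp only [ocomma] at hd h2 ⊢
        rcases fillTDel C (essence_osemi_ne_top (by simp) hE) hd with
          ⟨C', prop, rfl⟩ | ⟨Δ₂, hX, rfl⟩
        · have := LBIZ.wandL (Cand := Candidate) (cut := false) none none (.fm .mtop) Γt hE
            (.inl ⟨rfl, rfl, rfl⟩) h1 (IHn h2 (by omega) _ (prop _))
          simpa [ocomma] using this
        · obtain ⟨Γt₂, hE₂⟩ := essence_osemi_tdel (by simp) hE hX
          have := LBIZ.wandL (Cand := Candidate) (cut := false) none none (.fm .mtop) Γt₂ hE₂
            (.inl ⟨rfl, rfl, rfl⟩) h1 (IHn h2 (by omega) _ (fillTDelCongr C (.semiR _ hX)))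
          simpa [ocomma] using this
      · simp only [ocomma] at hd h2 ⊢
        rcases fillTDel C (by simp) hd with ⟨C', prop, rfl⟩ | ⟨X₂, hX, rfl⟩
        · have := LBIZ.wandL (Cand := Candidate) (cut := false) (some Γ₀) (some Rj) Rei Γt hE
            (.inr ⟨Γ₀, Rj, rfl, rfl, hcands⟩) h1 (IHn h2 (by omega) _ (prop _))
          simpa [ocomma] using this
        · rcases tdel_comma_inv hX with ⟨Γ₁, hg, rfl⟩ | ⟨Δ₂, hg, rfl⟩
          · rcases hcands with hc | hc
            · obtain ⟨Rei', Rj', se, sj, hc'⟩ := cand_tdel hc hg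
              have h1' := ap se h1 (by omega)
              have h2a := IHn h2 (by omega) _ (fillTDelCongr C (.semiR _ (.commaL _ hg)))
              have h2b : LBIZ Candidate false
                  (C.fill (.semi (.comma Rj' (.fm G)) (.comma Γ₁ Δ))) H₀ n₂ := by
                rcases sj with rfl | hs | hs
                · exact h2a
                · exact IHn h2a (by omega) _ (fillTDelCongr C (.semiL _ (.commaL _ hs)))
                · exact repl_adm n₂ h2a le_rfl _ (fillReplCongr C (.semiL _ (.commaL _ hs)))
              have := LBIZ.wandL (Cand := Candidate) (cut := false) (some Γ₁) (some Rj') Rei' Γt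
                hE (.inr ⟨Γ₁, Rj', rfl, rfl, .inl hc'⟩) h1' h2b
              simpa [ocomma] using this
            · obtain ⟨Rj', Rei', sj, se, hc'⟩ := cand_tdel hc hg
              have h1' := ap se h1 (by omega)
              have h2a := IHn h2 (by omega) _ (fillTDelCongr C (.semiR _ (.commaL _ hg)))
              have h2b : LBIZ Candidate false
                  (C.fill (.semi (.comma Rj' (.fm G)) (.comma Γ₁ Δ))) H₀ n₂ := by
                rcases sj with rfl | hs | hs
                · exact h2a
                · exact IHn h2a (by omega) _ (fillTDelCongr C (.semiL _ (.commaL _ hs)))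
                · exact repl_adm n₂ h2a le_rfl _ (fillReplCongr C (.semiL _ (.commaL _ hs)))
              have := LBIZ.wandL (Cand := Candidate) (cut := false) (some Γ₁) (some Rj') Rei' Γt
                hE (.inr ⟨Γ₁, Rj', rfl, rfl, .inr hc'⟩) h1' h2b
              simpa [ocomma] using this
          · obtain ⟨Γt₂, hE₂⟩ := essence_osemi_tdel (by simp) hE hg
            have h2' := IHn h2 (by omega) _ (fillTDelCongr C (.semiR _ (.commaR _ hg)))
            have := LBIZ.wandL (Cand := Candidate) (cut := false) (some Γ₀) (some Rj) Rei Γt₂ hE₂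
              (.inr ⟨Γ₀, Rj, rfl, rfl, hcands⟩) h1 h2'
            simpa [ocomma] using this
    | @wandR Γ₀ F G n₁ hp ih =>
      intro hm Y hd
      exact .wandR (IHn hp (by omega) _ (.commaL _ hd))
    | @equiv Γ₀ Γ₁ H₀ n₁ hbe hp ih =>
      intro hm Y hd
      obtain ⟨Γ₂, hd₂, he₂⟩ := (beq_tdel hbe).1 hd
      exact .equiv he₂ (ih hm _ hd₂)
    | @cutRule Γ₁ F C G n₁ n₂ hcut h1 h2 ih1 ih2 => simp at hcut

/-- the additive unit is depth-preserving invertible in LBIZ. -/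
theorem lbiz_top_invertible (C : Ctx) (Γ₁ : Bunch) (H : BI) (k : Nat)
    (h : LBIZc (C.fill (.semi Γ₁ (.fm .top))) H k) :
    ∃ l ≤ k, LBIZc (C.fill Γ₁) H l :=
  ⟨k, le_rfl, tdel_adm k h le_rfl _ (fillTDelCongr C (.delR Γ₁))⟩
end
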